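/- arXiv:1903.07155 — 3 statements merged into one kernel-verified Lean document; each statement's English description precedes it below -/
import Mathlib

section
/- Let X be a doubling metric space and Φ a dimension function. For all subsets E, F of X: min(lower Φ-dimension of E, lower Φ-dimension of F) ≤ lower Φ-dimension of E ∪ F ≤ max(lower Φ-dimension of E, upper Φ-dimension of F). -/
open Set Metric Filter Topology
open scoped ENNReal

noncomputable section

/-- The least number of closed balls of radius `r` needed to cover `E`
(`∞` if there is no finite cover). -/
def coverNumber {X : Type*} [PseudoMetricSpace X] (r : ℝ) (E : Set X) : ℝ≥0∞ :=
  ⨅ (s : Finset X) (_ : E ⊆ ⋃ x ∈ s, closedBall x r), (s.card : ℝ≥0∞)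

/-- `Φ : (0,1) → [0,∞)` is a dimension function if `x ^ (1 + Φ x)` decreases to `0`
as `x` decreases to `0`. -/
def IsDimensionFunction (Φ : ℝ → ℝ) : Prop :=
  (∀ x ∈ Ioo (0:ℝ) 1, 0 ≤ Φ x) ∧
  (∀ x ∈ Ioo (0:ℝ) 1, ∀ y ∈ Ioo (0:ℝ) 1, x ≤ y → x ^ (1 + Φ x) ≤ y ^ (1 + Φ y)) ∧
  Tendsto (fun x : ℝ => x ^ (1 + Φ x)) (nhdsWithin 0 (Ioo 0 1)) (nhds 0)

/-- A metric space is doubling if there is `M ≥ 1` such that every closed ball of radius `R`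
can be covered by at most `M` closed balls of radius `R / 2`. -/
def IsDoublingSpace (X : Type*) [PseudoMetricSpace X] : Prop :=
  ∃ M : ℕ, 1 ≤ M ∧ ∀ (x : X) (R : ℝ), ∃ s : Finset X, s.card ≤ M ∧
    closedBall x R ⊆ ⋃ y ∈ s, closedBall y (R / 2)

/-- The upper `Φ`-dimension. -/
def upperPhiDim {X : Type*} [PseudoMetricSpace X] (Φ : ℝ → ℝ) (E : Set X) : ℝ :=
  sInf {α : ℝ | ∃ c₁ > (0:ℝ), ∃ c₂ > (0:ℝ), ∀ r R : ℝ,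
    0 < r → r ≤ R ^ (1 + Φ R) → R ^ (1 + Φ R) ≤ R → R < c₁ → ∀ z ∈ E,
      coverNumber r (closedBall z R ∩ E) ≤ ENNReal.ofReal (c₂ * (R / r) ^ α)}

/-- The lower `Φ`-dimension. -/
def lowerPhiDim {X : Type*} [PseudoMetricSpace X] (Φ : ℝ → ℝ) (E : Set X) : ℝ :=
  sSup {α : ℝ | ∃ c₁ > (0:ℝ), ∃ c₂ > (0:ℝ), ∀ r R : ℝ,
    0 < r → r ≤ R ^ (1 + Φ R) → R ^ (1 + Φ R) ≤ R → R < c₁ → ∀ z ∈ E,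
      ENNReal.ofReal (c₂ * (R / r) ^ α) ≤ coverNumber r (closedBall z R ∩ E)}

/-- The (upper) Assouad dimension: the upper `Φ`-dimension with `Φ ≡ 0`. -/
def assouadDim {X : Type*} [PseudoMetricSpace X] (E : Set X) : ℝ :=
  upperPhiDim (fun _ => 0) E

/-- The lower Assouad dimension: the lower `Φ`-dimension with `Φ ≡ 0`. -/
def lowerAssouadDim {X : Type*} [PseudoMetricSpace X] (E : Set X) : ℝ :=
  lowerPhiDim (fun _ => 0) E

/-- The upper `θ`-Assouad spectrum: the upper `Φ`-dimension with constant `Φ = 1/θ - 1`. -/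
def upperAssouadSpectrum {X : Type*} [PseudoMetricSpace X] (θ : ℝ) (E : Set X) : ℝ :=
  upperPhiDim (fun _ => 1 / θ - 1) E

/-- The lower `θ`-Assouad spectrum: the lower `Φ`-dimension with constant `Φ = 1/θ - 1`. -/
def lowerAssouadSpectrum {X : Type*} [PseudoMetricSpace X] (θ : ℝ) (E : Set X) : ℝ :=
  lowerPhiDim (fun _ => 1 / θ - 1) E

/-- The upper quasi-Assouad dimension, `lim_{θ → 1}` of the upper `θ`-Assouad spectrum;
since the upper spectrum is nondecreasing in `θ`, this limit is the supremum over
`θ ∈ (0,1)`. -/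
def quasiAssouadDim {X : Type*} [PseudoMetricSpace X] (E : Set X) : ℝ :=
  ⨆ θ : Ioo (0:ℝ) 1, upperAssouadSpectrum (θ : ℝ) E

/-- The lower quasi-Assouad dimension, `lim_{θ → 1}` of the lower `θ`-Assouad spectrum;
since the lower spectrum is nonincreasing in `θ`, this limit is the infimum over
`θ ∈ (0,1)`. -/
def quasiLowerAssouadDim {X : Type*} [PseudoMetricSpace X] (E : Set X) : ℝ :=
  ⨅ θ : Ioo (0:ℝ) 1, lowerAssouadSpectrum (θ : ℝ) E

/-- Upper box dimension `limsup_{r → 0} log N_r(E) / |log r|`. -/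
def upperBoxDim {X : Type*} [PseudoMetricSpace X] (E : Set X) : ℝ :=
  limsup (fun r : ℝ => Real.log (coverNumber r E).toReal / |Real.log r|)
    (nhdsWithin 0 (Ioo 0 1))

/-- Lower box dimension `liminf_{r → 0} log N_r(E) / |log r|`. -/
def lowerBoxDim {X : Type*} [PseudoMetricSpace X] (E : Set X) : ℝ :=
  liminf (fun r : ℝ => Real.log (coverNumber r E).toReal / |Real.log r|)
    (nhdsWithin 0 (Ioo 0 1))


namespace PhiAux

variable {X : Type*} [PseudoMetricSpace X]

theorem coverNumber_le_card {r : ℝ} {S : Set X} {s : Finset X}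
    (hs : S ⊆ ⋃ x ∈ s, closedBall x r) : coverNumber r S ≤ s.card :=
  iInf₂_le s hs

theorem coverNumber_mono_set {r : ℝ} {S T : Set X} (h : S ⊆ T) :
    coverNumber r S ≤ coverNumber r T :=
  le_iInf₂ fun s hs => iInf₂_le s (h.trans hs)

theorem coverNumber_anti_rad {r r' : ℝ} (h : r ≤ r') (S : Set X) :
    coverNumber r' S ≤ coverNumber r S :=
  le_iInf₂ fun s hs => iInf₂_le s
    (hs.trans (Set.iUnion₂_mono fun x _ => closedBall_subset_closedBall h))

theorem one_le_coverNumber {r : ℝ} {S : Set X} (h : S.Nonempty) :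
    1 ≤ coverNumber r S := by
  refine le_iInf₂ fun s hs => ?_
  obtain ⟨z, hz⟩ := h
  obtain ⟨x, hx, -⟩ := Set.mem_iUnion₂.1 (hs hz)
  exact_mod_cast Nat.one_le_cast.2 (Finset.card_pos.2 ⟨x, hx⟩)

theorem coverNumber_empty (r : ℝ) : coverNumber r (∅ : Set X) = 0 := by
  refine le_antisymm ?_ zero_le
  simpa using coverNumber_le_card (r := r) (s := (∅ : Finset X)) (by simp)

theorem coverNumber_eq_top {r : ℝ} {S : Set X}
    (h : ¬ ∃ s : Finset X, S ⊆ ⋃ x ∈ s, closedBall x r) : coverNumber r S = ⊤ := by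
  rw [coverNumber]
  refine le_antisymm le_top (le_iInf₂ fun s hs => absurd ⟨s, hs⟩ h)

theorem exists_min_cover {r : ℝ} {S : Set X}
    (h : ∃ s : Finset X, S ⊆ ⋃ x ∈ s, closedBall x r) :
    ∃ s : Finset X, (S ⊆ ⋃ x ∈ s, closedBall x r) ∧ (s.card : ℝ≥0∞) = coverNumber r S := by
  classical
  have hP : ∃ n : ℕ, ∃ s : Finset X, (S ⊆ ⋃ x ∈ s, closedBall x r) ∧ s.card = n := by
    obtain ⟨s, hs⟩ := h; exact ⟨s.card, s, hs, rfl⟩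
  obtain ⟨s, hs, hcard⟩ := Nat.find_spec hP
  refine ⟨s, hs, le_antisymm (le_iInf₂ fun t ht => ?_) (coverNumber_le_card hs)⟩
  rw [hcard]
  exact_mod_cast Nat.find_min' hP ⟨t, ht, rfl⟩

theorem coverNumber_union_le (r : ℝ) (S T : Set X) :
    coverNumber r (S ∪ T) ≤ coverNumber r S + coverNumber r T := by
  classical
  by_cases hS : ∃ s : Finset X, S ⊆ ⋃ x ∈ s, closedBall x r
  · by_cases hT : ∃ s : Finset X, T ⊆ ⋃ x ∈ s, closedBall x r
    · obtain ⟨s, hs, hcs⟩ := exists_min_cover hS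
      obtain ⟨t, ht, hct⟩ := exists_min_cover hT
      have hcover : S ∪ T ⊆ ⋃ x ∈ (s ∪ t), closedBall x r := by
        refine Set.union_subset (hs.trans ?_) (ht.trans ?_) <;>
        · refine Set.iUnion₂_subset fun x hx => ?_
          exact Set.subset_iUnion₂ (s := fun x _ => closedBall x r) x
            (by simp only [Finset.mem_union]; tauto)
      calc coverNumber r (S ∪ T) ≤ ((s ∪ t).card : ℝ≥0∞) := coverNumber_le_card hcover
        _ ≤ ((s.card + t.card : ℕ) : ℝ≥0∞) := by exact_mod_cast Finset.card_union_le s t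
        _ = coverNumber r S + coverNumber r T := by rw [Nat.cast_add, hcs, hct]
    · rw [coverNumber_eq_top hT]; simp
  · rw [coverNumber_eq_top hS]; simp

theorem coverNumber_biUnion_le (r : ℝ) (s : Finset X) (f : X → Set X) :
    coverNumber r (⋃ x ∈ s, f x) ≤ ∑ x ∈ s, coverNumber r (f x) := by
  classical
  induction s using Finset.induction_on with
  | empty =>
    have : coverNumber r (∅ : Set X) ≤ ((∅ : Finset X).card : ℝ≥0∞) :=
      coverNumber_le_card (by simp)
    simpa using this
  | insert a s' hx ih =>
    rw [Finset.sum_insert hx]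
    refine le_trans ?_ (add_le_add le_rfl ih)
    refine le_trans (coverNumber_mono_set ?_) (coverNumber_union_le r (f a) (⋃ x ∈ s', f x))
    simp [Set.biUnion_insert]

theorem coverNumber_ball_pow {M : ℕ} (hM : ∀ (x : X) (R : ℝ), ∃ s : Finset X, s.card ≤ M ∧
    closedBall x R ⊆ ⋃ y ∈ s, closedBall y (R / 2)) :
    ∀ (n : ℕ) (z : X) (R : ℝ), coverNumber (R / 2 ^ n) (closedBall z R) ≤ (M : ℝ≥0∞) ^ n := by
  intro n
  induction n with
  | zero =>
    intro z R
    simpa using coverNumber_le_card (s := {z}) (r := R) (by simp)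
  | succ n ih =>
    intro z R
    obtain ⟨s, hcard, hcover⟩ := hM z R
    calc coverNumber (R / 2 ^ (n + 1)) (closedBall z R)
        ≤ coverNumber (R / 2 ^ (n + 1)) (⋃ y ∈ s, closedBall y (R / 2)) :=
          coverNumber_mono_set hcover
      _ ≤ ∑ y ∈ s, coverNumber (R / 2 ^ (n + 1)) (closedBall y (R / 2)) :=
          coverNumber_biUnion_le _ _ _
      _ ≤ ∑ _y ∈ s, (M : ℝ≥0∞) ^ n := by
          refine Finset.sum_le_sum fun y _ => ?_
          have : R / 2 ^ (n + 1) = (R / 2) / 2 ^ n := by ring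
          rw [this]; exact ih y (R / 2)
      _ ≤ (M : ℝ≥0∞) ^ (n + 1) := by
          rw [Finset.sum_const, nsmul_eq_mul, pow_succ']
          exact mul_le_mul_left (by exact_mod_cast hcard) _

/-- Polynomial covering bound in a doubling space. -/
theorem coverNumber_ball_le {M : ℕ} (hM1 : 1 ≤ M)
    (hM : ∀ (x : X) (R : ℝ), ∃ s : Finset X, s.card ≤ M ∧
      closedBall x R ⊆ ⋃ y ∈ s, closedBall y (R / 2))
    (z : X) {r R : ℝ} (hr : 0 < r) (hrR : r ≤ R) :
    coverNumber r (closedBall z R) ≤ ENNReal.ofReal (2 ^ M * (R / r) ^ (M : ℝ)) := by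
  have hR : 0 < R := hr.trans_le hrR
  have h1 : (1:ℝ) ≤ R / r := (one_le_div hr).2 hrR
  obtain ⟨n, hn, hmin⟩ : ∃ n : ℕ, R / r < 2 ^ n ∧ ∀ m : ℕ, m < n → ¬ (R / r < 2 ^ m) := by
    have h := pow_unbounded_of_one_lt (R / r) (one_lt_two (α := ℝ))
    exact ⟨Nat.find h, Nat.find_spec h, fun m hm => Nat.find_min h hm⟩
  have hnpos : 0 < n := by
    rcases Nat.eq_zero_or_pos n with h0 | h; · rw [h0] at hn; simp at hn; linarith
    · exact h
  have hlow : (2:ℝ) ^ (n - 1) ≤ R / r := by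
    have := hmin (n-1) (Nat.sub_lt hnpos one_pos); linarith [not_lt.1 this]
  have h2n : (2:ℝ) ^ n ≤ 2 * (R / r) := by
    have : (2:ℝ) ^ n = 2 * 2 ^ (n - 1) := by
      rw [← pow_succ']; congr 1; omega
    rw [this]; linarith
  have hRr : R / 2 ^ n ≤ r := by
    rw [div_le_iff₀ (by positivity)]
    rw [div_lt_iff₀ hr] at hn
    linarith
  calc coverNumber r (closedBall z R) ≤ coverNumber (R / 2 ^ n) (closedBall z R) :=
        coverNumber_anti_rad hRr _
    _ ≤ (M : ℝ≥0∞) ^ n := coverNumber_ball_pow hM n z R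
    _ ≤ ENNReal.ofReal (2 ^ M * (R / r) ^ (M : ℝ)) := by
        rw [← Nat.cast_pow, ← ENNReal.ofReal_natCast (M ^ n)]
        refine ENNReal.ofReal_le_ofReal ?_
        push_cast
        calc ((M:ℝ)) ^ n ≤ ((2:ℝ) ^ M) ^ n := by
              refine pow_le_pow_left₀ (by positivity) ?_ n
              exact_mod_cast (Nat.lt_two_pow_self (n := M)).le
          _ = ((2:ℝ) ^ n) ^ M := by rw [← pow_mul, ← pow_mul, Nat.mul_comm]
          _ ≤ (2 * (R / r)) ^ M := pow_le_pow_left₀ (by positivity) h2n M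
          _ = 2 ^ M * (R / r) ^ (M:ℝ) := by
              rw [mul_pow, Real.rpow_natCast]

/-- The defining set whose `sSup` is the lower `Φ`-dimension. -/
def lowerSet (Φ : ℝ → ℝ) (E : Set X) : Set ℝ :=
  {α : ℝ | ∃ c₁ > (0:ℝ), ∃ c₂ > (0:ℝ), ∀ r R : ℝ,
    0 < r → r ≤ R ^ (1 + Φ R) → R ^ (1 + Φ R) ≤ R → R < c₁ → ∀ z ∈ E,
      ENNReal.ofReal (c₂ * (R / r) ^ α) ≤ coverNumber r (closedBall z R ∩ E)}

/-- The defining set whose `sInf` is the upper `Φ`-dimension. -/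
def upperSet (Φ : ℝ → ℝ) (E : Set X) : Set ℝ :=
  {α : ℝ | ∃ c₁ > (0:ℝ), ∃ c₂ > (0:ℝ), ∀ r R : ℝ,
    0 < r → r ≤ R ^ (1 + Φ R) → R ^ (1 + Φ R) ≤ R → R < c₁ → ∀ z ∈ E,
      coverNumber r (closedBall z R ∩ E) ≤ ENNReal.ofReal (c₂ * (R / r) ^ α)}

/-- Existence of admissible pairs with arbitrarily large ratio. -/
theorem exists_admissible {Φ : ℝ → ℝ} (hΦ : IsDimensionFunction Φ) (c K : ℝ) (hc : 0 < c)
    (hK : 0 < K) : ∃ r R : ℝ, 0 < r ∧ r ≤ R ^ (1 + Φ R) ∧ R ^ (1 + Φ R) ≤ R ∧ R < c ∧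
      K < R / r := by
  set R := min c 1 / 2 with hRdef
  have hR0 : 0 < R := by positivity
  have hR1 : R < 1 := by
    have : min c 1 ≤ 1 := min_le_right _ _
    rw [hRdef]; linarith
  have hRmem : R ∈ Ioo (0:ℝ) 1 := ⟨hR0, hR1⟩
  have hΦR : 0 ≤ Φ R := hΦ.1 R hRmem
  have hpow_pos : 0 < R ^ (1 + Φ R) := Real.rpow_pos_of_pos hR0 _
  have hpow_le : R ^ (1 + Φ R) ≤ R := by
    have h := Real.rpow_le_rpow_of_exponent_ge hR0 hR1.le
      (by linarith : (1:ℝ) ≤ 1 + Φ R)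
    rwa [Real.rpow_one] at h
  refine ⟨min (R ^ (1 + Φ R)) (R / (K + 1)), R, by positivity, min_le_left _ _, hpow_le, ?_, ?_⟩
  · have : min c 1 ≤ c := min_le_left _ _
    rw [hRdef]; linarith
  · have hle : min (R ^ (1 + Φ R)) (R / (K + 1)) ≤ R / (K + 1) := min_le_right _ _
    have hpos : (0:ℝ) < min (R ^ (1 + Φ R)) (R / (K + 1)) := by positivity
    calc K < K + 1 := by linarith
      _ = R / (R / (K + 1)) := by field_simp
      _ ≤ R / min (R ^ (1 + Φ R)) (R / (K + 1)) := by
          apply div_le_div_of_nonneg_left hR0.le hpos hle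

/-- Comparison lemma: if `c₂ (R/r)^α ≤ c₂' (R/r)^β` for all admissible pairs then `α ≤ β`. -/
theorem le_of_admissible_bound {Φ : ℝ → ℝ} (hΦ : IsDimensionFunction Φ) {α β c c₂ c₂' : ℝ}
    (hc : 0 < c) (hc₂ : 0 < c₂) (hc₂' : 0 < c₂')
    (h : ∀ r R : ℝ, 0 < r → r ≤ R ^ (1 + Φ R) → R ^ (1 + Φ R) ≤ R → R < c →
      c₂ * (R / r) ^ α ≤ c₂' * (R / r) ^ β) : α ≤ β := by
  by_contra hab
  push_neg at hab
  set γ := α - β with hγ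
  have hγ0 : 0 < γ := by simp [hγ]; linarith
  set K := 1 + (c₂' / c₂ + 1) ^ (1 / γ) with hKdef
  have hbase : (0:ℝ) < c₂' / c₂ + 1 := by positivity
  have hK0 : 0 < K := by positivity
  obtain ⟨r, R, hr, hr2, hr3, hr4, hr5⟩ := exists_admissible hΦ c K hc hK0
  have hRr1 : 1 ≤ R / r := by
    have := hr2.trans hr3
    exact (one_le_div hr).2 this
  have hKγ : c₂' / c₂ < K ^ γ := by
    have h1 : (c₂' / c₂ + 1) ^ (1 / γ) ≤ K := by rw [hKdef]; linarith
    have h2 : ((c₂' / c₂ + 1) ^ (1 / γ)) ^ γ ≤ K ^ γ :=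
      Real.rpow_le_rpow (by positivity) h1 hγ0.le
    rw [← Real.rpow_mul hbase.le, one_div_mul_cancel hγ0.ne', Real.rpow_one] at h2
    linarith
  have hbig : c₂' / c₂ < (R / r) ^ γ := by
    refine hKγ.trans_le (Real.rpow_le_rpow hK0.le hr5.le hγ0.le)
  have hkey := h r R hr hr2 hr3 hr4
  rw [show α = γ + β by rw [hγ]; ring, Real.rpow_add (by linarith : (0:ℝ) < R / r)] at hkey
  have hβpos : 0 < (R / r) ^ β := Real.rpow_pos_of_pos (by linarith) _
  have : c₂ * (R / r) ^ γ ≤ c₂' := by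
    have := (mul_le_mul_iff_left₀ hβpos).1
      (by linarith [hkey] : (c₂ * (R / r) ^ γ) * (R / r) ^ β ≤ c₂' * (R / r) ^ β)
    linarith
  rw [div_lt_iff₀ hc₂] at hbig
  linarith [hbig, this]

theorem one_le_ratio {Φ : ℝ → ℝ} {r R : ℝ} (hr : 0 < r) (h2 : r ≤ R ^ (1 + Φ R))
    (h3 : R ^ (1 + Φ R) ≤ R) : 1 ≤ R / r :=
  (one_le_div hr).2 (h2.trans h3)

theorem zero_mem_lowerSet (Φ : ℝ → ℝ) (E : Set X) : (0:ℝ) ∈ lowerSet Φ E := by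
  refine ⟨1, one_pos, 1, one_pos, fun r R hr h2 h3 _ z hz => ?_⟩
  have hR : 0 < R := hr.trans_le (h2.trans h3)
  have : z ∈ closedBall z R ∩ E := ⟨mem_closedBall_self hR.le, hz⟩
  simpa using one_le_coverNumber ⟨z, this⟩

theorem lowerSet_downward {Φ : ℝ → ℝ} {E : Set X} {α β : ℝ} (hα : α ∈ lowerSet Φ E)
    (hβ : β ≤ α) : β ∈ lowerSet Φ E := by
  obtain ⟨c₁, hc₁, c₂, hc₂, h⟩ := hα
  refine ⟨c₁, hc₁, c₂, hc₂, fun r R hr h2 h3 h4 z hz => ?_⟩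
  refine le_trans (ENNReal.ofReal_le_ofReal ?_) (h r R hr h2 h3 h4 z hz)
  have h1 := one_le_ratio hr h2 h3
  exact mul_le_mul_of_nonneg_left (Real.rpow_le_rpow_of_exponent_le h1 hβ) hc₂.le

theorem upperSet_upward {Φ : ℝ → ℝ} {E : Set X} {α β : ℝ} (hα : α ∈ upperSet Φ E)
    (hβ : α ≤ β) : β ∈ upperSet Φ E := by
  obtain ⟨c₁, hc₁, c₂, hc₂, h⟩ := hα
  refine ⟨c₁, hc₁, c₂, hc₂, fun r R hr h2 h3 h4 z hz => ?_⟩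
  refine le_trans (h r R hr h2 h3 h4 z hz) (ENNReal.ofReal_le_ofReal ?_)
  have h1 := one_le_ratio hr h2 h3
  exact mul_le_mul_of_nonneg_left (Real.rpow_le_rpow_of_exponent_le h1 hβ) hc₂.le

theorem natCast_mem_upperSet {M : ℕ} (hM1 : 1 ≤ M)
    (hM : ∀ (x : X) (R : ℝ), ∃ s : Finset X, s.card ≤ M ∧
      closedBall x R ⊆ ⋃ y ∈ s, closedBall y (R / 2))
    (Φ : ℝ → ℝ) (E : Set X) : (M : ℝ) ∈ upperSet Φ E := by
  refine ⟨1, one_pos, 2 ^ M, by positivity, fun r R hr h2 h3 _ z _ => ?_⟩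
  exact le_trans (coverNumber_mono_set Set.inter_subset_left)
    (coverNumber_ball_le hM1 hM z hr (h2.trans h3))

theorem mem_lowerSet_le_mem_upperSet {Φ : ℝ → ℝ} (hΦ : IsDimensionFunction Φ) {E : Set X}
    (hE : E.Nonempty) {α β : ℝ} (hα : α ∈ lowerSet Φ E) (hβ : β ∈ upperSet Φ E) : α ≤ β := by
  obtain ⟨z, hz⟩ := hE
  obtain ⟨c₁, hc₁, c₂, hc₂, h⟩ := hα
  obtain ⟨c₁', hc₁', c₂', hc₂', h'⟩ := hβ
  refine le_of_admissible_bound hΦ (c := min c₁ c₁') (lt_min hc₁ hc₁') hc₂ hc₂'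
    fun r R hr h2 h3 h4 => ?_
  have h1 := one_le_ratio hr h2 h3
  have hle := (h r R hr h2 h3 (h4.trans_le (min_le_left _ _)) z hz).trans
    (h' r R hr h2 h3 (h4.trans_le (min_le_right _ _)) z hz)
  rw [ENNReal.ofReal_le_ofReal_iff
    (mul_nonneg hc₂'.le (Real.rpow_nonneg (by linarith) _))] at hle
  exact hle

theorem lowerSet_bddAbove {Φ : ℝ → ℝ} (hΦ : IsDimensionFunction Φ) {M : ℕ} (hM1 : 1 ≤ M)
    (hM : ∀ (x : X) (R : ℝ), ∃ s : Finset X, s.card ≤ M ∧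
      closedBall x R ⊆ ⋃ y ∈ s, closedBall y (R / 2))
    {E : Set X} (hE : E.Nonempty) : BddAbove (lowerSet Φ E) :=
  ⟨(M : ℝ), fun _ hα =>
    mem_lowerSet_le_mem_upperSet hΦ hE hα (natCast_mem_upperSet hM1 hM Φ E)⟩

theorem lowerSet_inter (Φ : ℝ → ℝ) (E F : Set X) {α : ℝ} (hE : α ∈ lowerSet Φ E)
    (hF : α ∈ lowerSet Φ F) : α ∈ lowerSet Φ (E ∪ F) := by
  obtain ⟨c₁, hc₁, c₂, hc₂, h⟩ := hE
  obtain ⟨c₁', hc₁', c₂', hc₂', h'⟩ := hF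
  refine ⟨min c₁ c₁', lt_min hc₁ hc₁', min c₂ c₂', lt_min hc₂ hc₂',
    fun r R hr h2 h3 h4 z hz => ?_⟩
  have h1 := one_le_ratio hr h2 h3
  have hpow : (0:ℝ) ≤ (R / r) ^ α := Real.rpow_nonneg (by linarith) _
  rcases hz with hz | hz
  · refine le_trans ?_ ((h r R hr h2 h3 (h4.trans_le (min_le_left _ _)) z hz).trans
      (coverNumber_mono_set (Set.inter_subset_inter_right _ Set.subset_union_left)))
    exact ENNReal.ofReal_le_ofReal (mul_le_mul_of_nonneg_right (min_le_left _ _) hpow)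
  · refine le_trans ?_ ((h' r R hr h2 h3 (h4.trans_le (min_le_right _ _)) z hz).trans
      (coverNumber_mono_set (Set.inter_subset_inter_right _ Set.subset_union_right)))
    exact ENNReal.ofReal_le_ofReal (mul_le_mul_of_nonneg_right (min_le_right _ _) hpow)

/-- Key step: a lower exponent for `E ∪ F` which exceeds an upper exponent for `F`
is a lower exponent for `E`. -/
theorem mem_lowerSet_of_union {Φ : ℝ → ℝ} (hΦ : IsDimensionFunction Φ) {E F : Set X}
    {α β : ℝ} (hα : α ∈ lowerSet Φ (E ∪ F)) (hβ : β ∈ upperSet Φ F) (hβ0 : 0 ≤ β)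
    (hαβ : β < α) : α ∈ lowerSet Φ E := by
  obtain ⟨c₁, hc₁, c₂, hc₂, h⟩ := hα
  obtain ⟨c₁', hc₁', c₂', hc₂', h'⟩ := hβ
  set T₀ : ℝ := max 1 (2 * c₂' * 2 ^ β / c₂) with hT₀def
  have hT₀1 : (1:ℝ) ≤ T₀ := le_max_left _ _
  have hT₀0 : (0:ℝ) < T₀ := by linarith
  have hγ : 0 < α - β := by linarith
  have hα0 : 0 < α := lt_of_le_of_lt hβ0 hαβ
  set T₁ : ℝ := T₀ ^ (1 / (α - β)) with hT₁def
  have hT₁0 : 0 < T₁ := Real.rpow_pos_of_pos hT₀0 _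
  refine ⟨min (min c₁ (c₁' / 2)) (1 / 2), by positivity,
    min (c₂ / 2) (T₁ ^ (-α)), lt_min (by linarith) (Real.rpow_pos_of_pos hT₁0 _),
    fun r R hr h2 h3 h4 z hz => ?_⟩
  have hR4a : R < c₁ := h4.trans_le ((min_le_left _ _).trans (min_le_left _ _))
  have hR4b : R < c₁' / 2 := h4.trans_le ((min_le_left _ _).trans (min_le_right _ _))
  have hR4c : R < 1 / 2 := h4.trans_le (min_le_right _ _)
  have hR0 : 0 < R := hr.trans_le (h2.trans h3)
  have ht1 : 1 ≤ R / r := one_le_ratio hr h2 h3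
  have ht0 : 0 < R / r := by linarith
  set t : ℝ := R / r with htdef
  -- the lower bound for the union
  have hmain : ENNReal.ofReal (c₂ * t ^ α) ≤
      coverNumber r (closedBall z R ∩ E) + coverNumber r (closedBall z R ∩ F) := by
    refine le_trans (h r R hr h2 h3 hR4a z (Or.inl hz)) ?_
    rw [Set.inter_union_distrib_left]
    exact coverNumber_union_le r _ _
  -- the upper bound for the F part
  have hF : coverNumber r (closedBall z R ∩ F) ≤ ENNReal.ofReal (c₂' * 2 ^ β * t ^ β) := by
    rcases Set.eq_empty_or_nonempty (closedBall z R ∩ F) with hemp | ⟨w, hw⟩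
    · rw [hemp, coverNumber_empty]; exact zero_le
    · have hsub : closedBall z R ∩ F ⊆ closedBall w (2 * R) ∩ F := by
        rintro x ⟨hx, hxF⟩
        refine ⟨?_, hxF⟩
        rw [mem_closedBall] at *
        have := dist_triangle x z w
        have h1 : dist z w ≤ R := by rw [dist_comm]; exact hw.1
        linarith [hx, h1]
      have hadm2 : r ≤ (2 * R) ^ (1 + Φ (2 * R)) := by
        refine h2.trans (hΦ.2.1 R ⟨hR0, by linarith⟩ (2 * R) ⟨by linarith, by linarith⟩
          (by linarith))
      have hadm3 : (2 * R) ^ (1 + Φ (2 * R)) ≤ 2 * R := by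
        have hh := Real.rpow_le_rpow_of_exponent_ge (by linarith : (0:ℝ) < 2 * R)
          (by linarith : 2 * R ≤ 1)
          (by linarith [hΦ.1 (2 * R) ⟨by linarith, by linarith⟩] : (1:ℝ) ≤ 1 + Φ (2 * R))
        rwa [Real.rpow_one] at hh
      have := (coverNumber_mono_set hsub).trans
        (h' r (2 * R) hr hadm2 hadm3 (by linarith) w hw.2)
      refine this.trans (ENNReal.ofReal_le_ofReal (le_of_eq ?_))
      rw [show 2 * R / r = 2 * t from by rw [htdef]; ring,
        Real.mul_rpow (by norm_num) (by linarith), mul_assoc]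
  rcases le_or_gt T₀ (t ^ (α - β)) with hcase | hcase
  · -- large ratio: subtract
    have hsplit : t ^ α = t ^ (α - β) * t ^ β := by
      rw [← Real.rpow_add ht0]; ring_nf
    have hkey : c₂' * 2 ^ β * t ^ β ≤ c₂ / 2 * t ^ α := by
      rw [hsplit, ← mul_assoc]
      refine mul_le_mul_of_nonneg_right ?_ (Real.rpow_nonneg (by linarith) _)
      have : 2 * c₂' * 2 ^ β / c₂ ≤ t ^ (α - β) := le_trans (le_max_right _ _) hcase
      rw [div_le_iff₀ hc₂] at this
      nlinarith [this]
    have hstep : ENNReal.ofReal (c₂ * t ^ α) ≤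
        coverNumber r (closedBall z R ∩ E) + ENNReal.ofReal (c₂ / 2 * t ^ α) :=
      hmain.trans (add_le_add le_rfl (hF.trans (ENNReal.ofReal_le_ofReal hkey)))
    have hsub2 : ENNReal.ofReal (c₂ / 2 * t ^ α) ≤ coverNumber r (closedBall z R ∩ E) := by
      have := tsub_le_iff_right.2 hstep
      rwa [← ENNReal.ofReal_sub _ (mul_nonneg (by linarith) (Real.rpow_nonneg (by linarith) _)),
        show c₂ * t ^ α - c₂ / 2 * t ^ α = c₂ / 2 * t ^ α from by ring] at this
    refine le_trans (ENNReal.ofReal_le_ofReal ?_) hsub2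
    exact mul_le_mul_of_nonneg_right (min_le_left _ _) (Real.rpow_nonneg (by linarith) _)
  · -- small ratio: trivial bound by 1
    have htT : t ≤ T₁ := by
      have h1 : (t ^ (α - β)) ^ (1 / (α - β)) ≤ T₁ :=
        Real.rpow_le_rpow (Real.rpow_nonneg (by linarith) _) hcase.le (by positivity)
      rwa [← Real.rpow_mul (by linarith), mul_one_div, div_self hγ.ne', Real.rpow_one] at h1
    have hbound : min (c₂ / 2) (T₁ ^ (-α)) * t ^ α ≤ 1 := by
      calc min (c₂ / 2) (T₁ ^ (-α)) * t ^ α ≤ T₁ ^ (-α) * T₁ ^ α := by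
            refine mul_le_mul (min_le_right _ _) (Real.rpow_le_rpow (by linarith) htT hα0.le)
              (Real.rpow_nonneg (by linarith) _) (Real.rpow_nonneg hT₁0.le _)
        _ = 1 := by rw [← Real.rpow_add hT₁0]; simp
    have hone : ENNReal.ofReal (min (c₂ / 2) (T₁ ^ (-α)) * t ^ α) ≤ 1 :=
      ENNReal.ofReal_le_one.2 hbound
    exact hone.trans (one_le_coverNumber ⟨z, mem_closedBall_self hR0.le, hz⟩)

end PhiAux


/-- Bounds for the lower `Φ`-dimension of a union. -/
theorem lowerPhiDim_union_bounds {X : Type*} [MetricSpace X] (hX : IsDoublingSpace X)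
    (Φ : ℝ → ℝ) (hΦ : IsDimensionFunction Φ) (E F : Set X) :
    min (lowerPhiDim Φ E) (lowerPhiDim Φ F) ≤ lowerPhiDim Φ (E ∪ F) ∧
    lowerPhiDim Φ (E ∪ F) ≤ max (lowerPhiDim Φ E) (upperPhiDim Φ F) := by
  obtain ⟨M, hM1, hM⟩ := hX
  have eqL : ∀ G : Set X, lowerPhiDim Φ G = sSup (PhiAux.lowerSet Φ G) := fun _ => rfl
  have eqU : ∀ G : Set X, upperPhiDim Φ G = sInf (PhiAux.upperSet Φ G) := fun _ => rfl
  rcases Set.eq_empty_or_nonempty F with hFe | hFne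
  · rw [hFe, Set.union_empty]
    exact ⟨min_le_left _ _, le_max_left _ _⟩
  rcases Set.eq_empty_or_nonempty E with hEe | hEne
  · rw [hEe, Set.empty_union]
    refine ⟨min_le_right _ _, le_trans ?_ (le_max_right _ _)⟩
    rw [eqL, eqU]
    refine csSup_le ⟨0, PhiAux.zero_mem_lowerSet Φ F⟩ fun α hα => ?_
    refine le_csInf ⟨(M:ℝ), PhiAux.natCast_mem_upperSet hM1 hM Φ F⟩ fun β hβ => ?_
    exact PhiAux.mem_lowerSet_le_mem_upperSet hΦ hFne hα hβ
  have hUne : (E ∪ F).Nonempty := hEne.inl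
  have hbddE := PhiAux.lowerSet_bddAbove hΦ hM1 hM hEne
  have hbddU := PhiAux.lowerSet_bddAbove hΦ hM1 hM hUne
  constructor
  · rw [eqL E, eqL F, eqL (E ∪ F)]
    by_contra hcon
    push_neg at hcon
    set m := min (sSup (PhiAux.lowerSet Φ E)) (sSup (PhiAux.lowerSet Φ F)) with hm
    set γ := (sSup (PhiAux.lowerSet Φ (E ∪ F)) + m) / 2 with hγ
    have hγ1 : sSup (PhiAux.lowerSet Φ (E ∪ F)) < γ := by rw [hγ]; linarith
    have hγ2 : γ < m := by rw [hγ]; linarith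
    have hγE : γ ∈ PhiAux.lowerSet Φ E := by
      obtain ⟨α, hαmem, hγα⟩ := exists_lt_of_lt_csSup ⟨0, PhiAux.zero_mem_lowerSet Φ E⟩
        (lt_of_lt_of_le hγ2 (min_le_left _ _))
      exact PhiAux.lowerSet_downward hαmem hγα.le
    have hγF : γ ∈ PhiAux.lowerSet Φ F := by
      obtain ⟨α, hαmem, hγα⟩ := exists_lt_of_lt_csSup ⟨0, PhiAux.zero_mem_lowerSet Φ F⟩
        (lt_of_lt_of_le hγ2 (min_le_right _ _))
      exact PhiAux.lowerSet_downward hαmem hγα.le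
    have := le_csSup hbddU (PhiAux.lowerSet_inter Φ E F hγE hγF)
    linarith
  · rw [eqL (E ∪ F), eqL E, eqU F]
    have hL0 : 0 ≤ sSup (PhiAux.lowerSet Φ E) :=
      le_csSup hbddE (PhiAux.zero_mem_lowerSet Φ E)
    refine csSup_le ⟨0, PhiAux.zero_mem_lowerSet Φ (E ∪ F)⟩ fun α hα => ?_
    by_contra hcon
    push_neg at hcon
    obtain ⟨hLα, hIα⟩ := max_lt_iff.1 hcon
    have hα0 : 0 < α := lt_of_le_of_lt hL0 hLα
    obtain ⟨β, hβmem, hβα⟩ := exists_lt_of_csInf_lt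
      ⟨(M:ℝ), PhiAux.natCast_mem_upperSet hM1 hM Φ F⟩ hIα
    have hβ' : max β 0 ∈ PhiAux.upperSet Φ F :=
      PhiAux.upperSet_upward hβmem (le_max_left _ _)
    have hβ'α : max β 0 < α := max_lt hβα hα0
    have hαE := PhiAux.mem_lowerSet_of_union hΦ hα hβ' (le_max_right _ _) hβ'α
    have := le_csSup hbddE hαE
    linarith

end
end

section
/- Let X be a doubling metric space, E ⊆ X a bounded set and Φ any dimension function. Then lower Φ-dimension of E ≤ lower box dimension of E ≤ upper box dimension of E ≤ upper Φ-dimension of E. -/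
open Set Metric Filter Topology
open scoped ENNReal

noncomputable section

/-! ### Auxiliary lemmas -/

section Aux

variable {X : Type*} [PseudoMetricSpace X] {A B E : Set X}

lemma aux_le_of_forall_pos {a b : ℝ} (h : ∀ ε > (0:ℝ), a ≤ b + ε) : a ≤ b := by
  by_contra hc
  push_neg at hc
  have := h ((a - b) / 2) (by linarith)
  linarith

lemma coverNumber_le_card {r : ℝ} {s : Finset X} (h : E ⊆ ⋃ x ∈ s, closedBall x r) :
    coverNumber r E ≤ s.card := iInf₂_le s h

lemma coverNumber_empty (r : ℝ) : coverNumber r (∅ : Set X) = 0 := by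
  refine le_antisymm ?_ zero_le
  simpa using coverNumber_le_card (s := (∅ : Finset X)) (r := r) (by simp)

lemma coverNumber_mono {r : ℝ} (h : A ⊆ B) : coverNumber r A ≤ coverNumber r B :=
  le_iInf₂ fun s hs => coverNumber_le_card (h.trans hs)

lemma one_le_coverNumber {r : ℝ} (h : E.Nonempty) : 1 ≤ coverNumber r E := by
  refine le_iInf₂ fun s hs => ?_
  obtain ⟨x, hx⟩ := h
  have := hs hx
  simp only [mem_iUnion] at this
  obtain ⟨y, hy, -⟩ := this
  have : 1 ≤ s.card := Finset.card_pos.2 ⟨y, hy⟩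
  exact_mod_cast this

lemma exists_cover {r : ℝ} (h : coverNumber r E ≠ ⊤) :
    ∃ s : Finset X, (E ⊆ ⋃ x ∈ s, closedBall x r) ∧ (s.card : ℝ≥0∞) ≤ coverNumber r E := by
  have hne : ∃ n : ℕ, ∃ s : Finset X, (E ⊆ ⋃ x ∈ s, closedBall x r) ∧ s.card = n := by
    by_contra hc
    push_neg at hc
    apply h
    refine le_antisymm le_top (le_iInf₂ fun s hs => ?_)
    exact absurd rfl (hc s.card s hs)
  obtain ⟨s, hs, hcard⟩ := Nat.sInf_mem hne
  refine ⟨s, hs, le_iInf₂ fun t ht => ?_⟩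
  have : sInf {n : ℕ | ∃ s : Finset X, (E ⊆ ⋃ x ∈ s, closedBall x r) ∧ s.card = n} ≤ t.card :=
    Nat.sInf_le ⟨t, ht, rfl⟩
  rw [hcard]
  exact_mod_cast this

lemma coverNumber_biUnion_le {ι : Type*} {r : ℝ} (t : Finset ι) (A : ι → Set X) :
    coverNumber r (⋃ i ∈ t, A i) ≤ ∑ i ∈ t, coverNumber r (A i) := by
  by_cases h : ∀ i ∈ t, coverNumber r (A i) ≠ ⊤
  · choose f hf hfc using fun i (hi : i ∈ t) => exists_cover (h i hi)
    classical
    set s : Finset X := t.attach.biUnion (fun i => f i.1 (by simpa using i.2)) with hs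
    have hcov : (⋃ i ∈ t, A i) ⊆ ⋃ x ∈ s, closedBall x r := by
      intro x hx
      simp only [mem_iUnion] at hx ⊢
      obtain ⟨i, hi, hxi⟩ := hx
      have := hf i hi hxi
      simp only [mem_iUnion] at this
      obtain ⟨y, hy, hxy⟩ := this
      exact ⟨y, by simp only [hs, Finset.mem_biUnion]; exact ⟨⟨i, hi⟩, Finset.mem_attach _ _, hy⟩,
        hxy⟩
    calc coverNumber r (⋃ i ∈ t, A i) ≤ s.card := coverNumber_le_card hcov
      _ ≤ ∑ i ∈ t.attach, ((f i.1 (by simpa using i.2)).card : ℝ≥0∞) := by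
          rw [hs]
          exact_mod_cast Nat.cast_le.2 (Finset.card_biUnion_le)
      _ ≤ ∑ i ∈ t.attach, coverNumber r (A i.1) := Finset.sum_le_sum fun i _ => hfc i.1 _
      _ = ∑ i ∈ t, coverNumber r (A i) := Finset.sum_attach t (fun i => coverNumber r (A i))
  · push_neg at h
    obtain ⟨i, hi, hitop⟩ := h
    have : (⊤ : ℝ≥0∞) ≤ ∑ i ∈ t, coverNumber r (A i) := by
      rw [← hitop]
      exact Finset.single_le_sum (f := fun i => coverNumber r (A i)) (fun _ _ => zero_le) hi
    exact le_trans le_top this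

lemma doubling_iter {M : ℕ}
    (hd : ∀ (x : X) (R : ℝ), ∃ s : Finset X, s.card ≤ M ∧
      closedBall x R ⊆ ⋃ y ∈ s, closedBall y (R / 2)) :
    ∀ (k : ℕ) (x : X) (R : ℝ), ∃ s : Finset X, s.card ≤ M ^ k ∧
      closedBall x R ⊆ ⋃ y ∈ s, closedBall y (R / 2 ^ k) := by
  intro k
  induction k with
  | zero => exact fun x R => ⟨{x}, by simp, by simp⟩
  | succ k ih =>
    intro x R
    obtain ⟨s, hcard, hcov⟩ := ih x R
    choose f hfcard hfcov using fun y : X => hd y (R / 2 ^ k)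
    classical
    refine ⟨s.biUnion f, ?_, ?_⟩
    · calc (s.biUnion f).card ≤ ∑ y ∈ s, (f y).card := Finset.card_biUnion_le
        _ ≤ ∑ _y ∈ s, M := Finset.sum_le_sum fun y _ => hfcard y
        _ = s.card * M := by rw [Finset.sum_const, smul_eq_mul]
        _ ≤ M ^ k * M := Nat.mul_le_mul_right _ hcard
        _ = M ^ (k + 1) := by ring
    · intro z hz
      obtain ⟨y, hy, hzy⟩ := by simpa only [mem_iUnion] using hcov hz
      have := hfcov y hzy
      simp only [mem_iUnion] at this ⊢
      obtain ⟨w, hw, hzw⟩ := this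
      refine ⟨w, Finset.mem_biUnion.2 ⟨y, hy, hw⟩, ?_⟩
      have : R / 2 ^ k / 2 = R / 2 ^ (k + 1) := by ring
      rwa [this] at hzw

lemma pow_ceil_le {M : ℕ} (hM : 1 ≤ M) {a : ℝ} (ha : 1 ≤ a) :
    a ≤ 2 ^ (⌈Real.logb 2 a⌉₊ : ℕ) ∧
    ((M : ℝ) ^ (⌈Real.logb 2 a⌉₊ : ℕ) ≤ M * a ^ (Real.logb 2 M)) := by
  have ha0 : (0:ℝ) < a := lt_of_lt_of_le one_pos ha
  set k : ℕ := ⌈Real.logb 2 a⌉₊ with hk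
  have h1 : Real.logb 2 a ≤ (k : ℝ) := Nat.le_ceil _
  have hlogb0 : 0 ≤ Real.logb 2 a := Real.logb_nonneg one_lt_two ha
  have h2 : (k : ℝ) < Real.logb 2 a + 1 := by
    have := Nat.ceil_lt_add_one hlogb0
    exact_mod_cast this
  constructor
  · have : a = (2:ℝ) ^ (Real.logb 2 a) := (Real.rpow_logb two_pos (by norm_num) ha0).symm
    calc a = (2:ℝ) ^ (Real.logb 2 a) := this
      _ ≤ (2:ℝ) ^ (k:ℝ) := Real.rpow_le_rpow_of_exponent_le one_le_two h1
      _ = 2 ^ k := by rw [Real.rpow_natCast]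
  · have hM1 : (1:ℝ) ≤ (M:ℝ) := by exact_mod_cast hM
    have hM0 : (0:ℝ) < (M:ℝ) := lt_of_lt_of_le one_pos hM1
    calc (M:ℝ) ^ k = (M:ℝ) ^ (k:ℝ) := (Real.rpow_natCast _ _).symm
      _ ≤ (M:ℝ) ^ (Real.logb 2 a + 1) :=
          Real.rpow_le_rpow_of_exponent_le hM1 (le_of_lt h2)
      _ = (M:ℝ) ^ (Real.logb 2 a) * M := by
          rw [Real.rpow_add hM0, Real.rpow_one]
      _ = M * a ^ (Real.logb 2 M) := by
          rw [mul_comm]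
          congr 1
          rw [Real.rpow_def_of_pos hM0, Real.rpow_def_of_pos ha0, Real.logb, Real.logb]
          ring_nf

lemma coverNumber_le_doubling {M : ℕ} (hM : 1 ≤ M)
    (hd : ∀ (x : X) (R : ℝ), ∃ s : Finset X, s.card ≤ M ∧
      closedBall x R ⊆ ⋃ y ∈ s, closedBall y (R / 2))
    {z : X} {D r : ℝ} (hr : 0 < r) (hrD : r ≤ D) (hE : E ⊆ closedBall z D) :
    coverNumber r E ≤ ENNReal.ofReal (M * (D / r) ^ (Real.logb 2 M)) := by
  have ha : (1:ℝ) ≤ D / r := (one_le_div hr).2 hrD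
  obtain ⟨h2k, hMk⟩ := pow_ceil_le hM ha
  set k := ⌈Real.logb 2 (D / r)⌉₊ with hk
  obtain ⟨s, hcard, hcov⟩ := doubling_iter hd k z D
  have hrad : D / 2 ^ k ≤ r := by
    rw [div_le_iff₀ (by positivity)]
    calc D = (D / r) * r := by field_simp
      _ ≤ 2 ^ k * r := by nlinarith [h2k, hr.le]
      _ = r * 2 ^ k := mul_comm _ _
  have hcov' : E ⊆ ⋃ y ∈ s, closedBall y r := by
    intro x hx
    obtain ⟨y, hy, hxy⟩ := by simpa only [mem_iUnion] using hcov (hE hx)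
    exact mem_iUnion.2 ⟨y, mem_iUnion.2 ⟨hy, closedBall_subset_closedBall hrad hxy⟩⟩
  calc coverNumber r E ≤ s.card := coverNumber_le_card hcov'
    _ ≤ ((M ^ k : ℕ) : ℝ≥0∞) := by exact_mod_cast hcard
    _ = ENNReal.ofReal ((M:ℝ) ^ k) := by
        rw [← ENNReal.ofReal_natCast]; norm_num
    _ ≤ ENNReal.ofReal (M * (D / r) ^ (Real.logb 2 M)) := ENNReal.ofReal_le_ofReal hMk

lemma aux_R {Φ : ℝ → ℝ} (hΦ : ∀ x ∈ Ioo (0:ℝ) 1, 0 ≤ Φ x) {c₁ : ℝ} (hc₁ : 0 < c₁) :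
    ∃ R : ℝ, 0 < R ∧ R < 1 ∧ R < c₁ ∧ 0 < R ^ (1 + Φ R) ∧ R ^ (1 + Φ R) ≤ R := by
  set R : ℝ := min c₁ 1 / 2 with hRdef
  have hmin : 0 < min c₁ 1 := lt_min hc₁ one_pos
  have hR0 : 0 < R := by rw [hRdef]; linarith
  have hR1 : R < 1 := by
    have h := min_le_right c₁ 1
    rw [hRdef]; linarith
  have hRc₁ : R < c₁ := by
    have h := min_le_left c₁ 1
    rw [hRdef]; linarith
  have hΦR : 0 ≤ Φ R := hΦ R ⟨hR0, hR1⟩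
  refine ⟨R, hR0, hR1, hRc₁, Real.rpow_pos_of_pos hR0 _, ?_⟩
  calc R ^ (1 + Φ R) ≤ R ^ (1:ℝ) :=
        Real.rpow_le_rpow_of_exponent_ge hR0 hR1.le (by linarith)
    _ = R := Real.rpow_one R

lemma aux_ev_mem {δ : ℝ} (hδ : 0 < δ) :
    ∀ᶠ r in 𝓝[Ioo (0:ℝ) 1] (0:ℝ), 0 < r ∧ r < 1 ∧ r < δ := by
  have h1 : ∀ᶠ r in 𝓝[Ioo (0:ℝ) 1] (0:ℝ), r ∈ Ioo (0:ℝ) 1 := eventually_mem_nhdsWithin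
  have h2 : ∀ᶠ r in 𝓝[Ioo (0:ℝ) 1] (0:ℝ), r < δ :=
    (eventually_lt_nhds hδ).filter_mono nhdsWithin_le_nhds
  filter_upwards [h1, h2] with r hr hrδ
  exact ⟨hr.1, hr.2, hrδ⟩

lemma aux_ev_ge {N : ℝ → ℝ≥0∞} {c₂ R α ρ ε : ℝ} (hc₂ : 0 < c₂)
    (hR0 : 0 < R) (hρ0 : 0 < ρ) (hε : 0 < ε)
    (hfin : ∀ r : ℝ, 0 < r → r < 1 → N r ≠ ⊤)
    (key : ∀ r : ℝ, 0 < r → r ≤ ρ → ENNReal.ofReal (c₂ * (R/r) ^ α) ≤ N r) :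
    ∀ᶠ r in 𝓝[Ioo (0:ℝ) 1] (0:ℝ), α - ε ≤ Real.log (N r).toReal / |Real.log r| := by
  set Cc : ℝ := Real.log c₂ + α * Real.log R with hCcdef
  set C' : ℝ := max (-Cc) 0 with hC'def
  have hC'0 : 0 ≤ C' := le_max_right _ _
  have hCc' : -C' ≤ Cc := by
    have h := le_max_left (-Cc) 0
    rw [hC'def]; linarith
  set δ : ℝ := min ρ (Real.exp (-(C'/ε))) with hδdef
  have hδ0 : 0 < δ := lt_min hρ0 (Real.exp_pos _)
  filter_upwards [aux_ev_mem hδ0] with r hr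
  obtain ⟨h0, h1, hrδ⟩ := hr
  have hrρ : r ≤ ρ := le_of_lt (lt_of_lt_of_le hrδ (min_le_left _ _))
  have hLp : 0 < -Real.log r := neg_pos.2 (Real.log_neg h0 h1)
  have hton : c₂ * (R/r) ^ α ≤ (N r).toReal :=
    (ENNReal.ofReal_le_iff_le_toReal (hfin r h0 h1)).1 (key r h0 hrρ)
  have hRr : (0:ℝ) < R / r := div_pos hR0 h0
  have hlogn : Cc + α * (-Real.log r) ≤ Real.log (N r).toReal := by
    have h := Real.log_le_log (by positivity) hton
    rw [Real.log_mul (ne_of_gt hc₂) (ne_of_gt (Real.rpow_pos_of_pos hRr α)),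
      Real.log_rpow hRr, Real.log_div (ne_of_gt hR0) (ne_of_gt h0)] at h
    have hx : Real.log c₂ + α * (Real.log R - Real.log r)
        = (Real.log c₂ + α * Real.log R) + α * (-Real.log r) := by ring
    rw [hx] at h
    rw [hCcdef]
    linarith [h]
  have hC'L : C' ≤ ε * (-Real.log r) := by
    have hrexp : r < Real.exp (-(C'/ε)) := lt_of_lt_of_le hrδ (min_le_right _ _)
    have hlogr : Real.log r < -(C'/ε) := by
      have h := Real.log_lt_log h0 hrexp
      rwa [Real.log_exp] at h
    have h2 : C'/ε < -Real.log r := by linarith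
    calc C' = ε * (C'/ε) := by field_simp
      _ ≤ ε * (-Real.log r) := mul_le_mul_of_nonneg_left h2.le hε.le
  rw [abs_of_neg (Real.log_neg h0 h1), le_div_iff₀ hLp]
  have hx : (α - ε) * (-Real.log r) = α * (-Real.log r) - ε * (-Real.log r) := by ring
  rw [hx]
  linarith [hlogn, hC'L, hCc']

lemma aux_ev_le {N : ℝ → ℝ≥0∞} {K c₂ R α ρ ε : ℝ} (hK : 1 ≤ K) (hc₂ : 0 < c₂)
    (hR0 : 0 < R) (hρ0 : 0 < ρ) (hε : 0 < ε)
    (hN1 : ∀ r : ℝ, 0 < r → r < 1 → 1 ≤ (N r).toReal)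
    (key : ∀ r : ℝ, 0 < r → r ≤ ρ → (N r).toReal ≤ K * (c₂ * (R/r) ^ α)) :
    ∀ᶠ r in 𝓝[Ioo (0:ℝ) 1] (0:ℝ), Real.log (N r).toReal / |Real.log r| ≤ α + ε := by
  set Cc : ℝ := Real.log (K * c₂) + α * Real.log R with hCcdef
  set C' : ℝ := max Cc 0 with hC'def
  have hC'0 : 0 ≤ C' := le_max_right _ _
  have hCc' : Cc ≤ C' := le_max_left _ _
  set δ : ℝ := min ρ (Real.exp (-(C'/ε))) with hδdef
  have hδ0 : 0 < δ := lt_min hρ0 (Real.exp_pos _)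
  filter_upwards [aux_ev_mem hδ0] with r hr
  obtain ⟨h0, h1, hrδ⟩ := hr
  have hrρ : r ≤ ρ := le_of_lt (lt_of_lt_of_le hrδ (min_le_left _ _))
  have hLp : 0 < -Real.log r := neg_pos.2 (Real.log_neg h0 h1)
  have hRr : (0:ℝ) < R / r := div_pos hR0 h0
  have hlogn : Real.log (N r).toReal ≤ Cc + α * (-Real.log r) := by
    have h := Real.log_le_log (by linarith [hN1 r h0 h1]) (key r h0 hrρ)
    rw [show K * (c₂ * (R/r) ^ α) = (K * c₂) * (R/r) ^ α by ring,
      Real.log_mul (by positivity) (ne_of_gt (Real.rpow_pos_of_pos hRr α)),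
      Real.log_rpow hRr, Real.log_div (ne_of_gt hR0) (ne_of_gt h0)] at h
    have hx : Real.log (K * c₂) + α * (Real.log R - Real.log r)
        = (Real.log (K * c₂) + α * Real.log R) + α * (-Real.log r) := by ring
    rw [hx] at h
    rw [hCcdef]
    linarith [h]
  have hC'L : C' ≤ ε * (-Real.log r) := by
    have hrexp : r < Real.exp (-(C'/ε)) := lt_of_lt_of_le hrδ (min_le_right _ _)
    have hlogr : Real.log r < -(C'/ε) := by
      have h := Real.log_lt_log h0 hrexp
      rwa [Real.log_exp] at h
    have h2 : C'/ε < -Real.log r := by linarith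
    calc C' = ε * (C'/ε) := by field_simp
      _ ≤ ε * (-Real.log r) := mul_le_mul_of_nonneg_left h2.le hε.le
  rw [abs_of_neg (Real.log_neg h0 h1), div_le_iff₀ hLp]
  have hx : (α + ε) * (-Real.log r) = α * (-Real.log r) + ε * (-Real.log r) := by ring
  rw [hx]
  linarith [hlogn, hC'L, hCc']

lemma aux_cover_bound {X : Type*} [PseudoMetricSpace X] {E : Set X} {R c₂ α ρ : ℝ}
    (hc₂ : 0 < c₂) (hR0 : 0 < R) (t : Finset X) (htcov : E ⊆ ⋃ y ∈ t, closedBall y (R/2))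
    (hb : ∀ z ∈ E, ∀ r : ℝ, 0 < r → r ≤ ρ →
      coverNumber r (closedBall z R ∩ E) ≤ ENNReal.ofReal (c₂ * (R/r) ^ α)) :
    ∃ K : ℝ, 1 ≤ K ∧ ∀ r : ℝ, 0 < r → r ≤ ρ →
      coverNumber r E ≤ ENNReal.ofReal (K * (c₂ * (R/r) ^ α)) := by
  classical
  set P : X → Prop := fun y => ((closedBall y (R/2)) ∩ E).Nonempty with hPdef
  set g : X → X := fun y => if h : P y then h.choose else y with hgdef
  have hgE : ∀ y, P y → g y ∈ E ∧ dist (g y) y ≤ R/2 := by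
    intro y h
    have hc := h.choose_spec
    constructor
    · simp only [hgdef, dif_pos h]
      exact hc.2
    · simp only [hgdef, dif_pos h]
      exact mem_closedBall.1 hc.1
  set t' := t.filter P with ht'def
  have hcov' : E ⊆ ⋃ y ∈ t', (closedBall (g y) R ∩ E) := by
    intro x hx
    obtain ⟨y, hy, hxy⟩ := by simpa only [mem_iUnion] using htcov hx
    have hPy : P y := ⟨x, hxy, hx⟩
    have hyt' : y ∈ t' := Finset.mem_filter.2 ⟨hy, hPy⟩
    have hdist : dist x (g y) ≤ R := by
      have h1 : dist x y ≤ R/2 := mem_closedBall.1 hxy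
      have h2 := (hgE y hPy).2
      calc dist x (g y) ≤ dist x y + dist y (g y) := dist_triangle _ _ _
        _ = dist x y + dist (g y) y := by rw [dist_comm y (g y)]
        _ ≤ R/2 + R/2 := add_le_add h1 h2
        _ = R := by ring
    exact mem_iUnion.2 ⟨y, mem_iUnion.2 ⟨hyt', ⟨mem_closedBall.2 hdist, hx⟩⟩⟩
  refine ⟨max (t'.card : ℝ) 1, le_max_right _ _, ?_⟩
  intro r h0 hrρ
  have hRrpos : (0:ℝ) < (R/r) ^ α := Real.rpow_pos_of_pos (div_pos hR0 h0) α
  calc coverNumber r E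
      ≤ coverNumber r (⋃ y ∈ t', (closedBall (g y) R ∩ E)) := coverNumber_mono hcov'
    _ ≤ ∑ y ∈ t', coverNumber r (closedBall (g y) R ∩ E) := coverNumber_biUnion_le t' _
    _ ≤ ∑ _y ∈ t', ENNReal.ofReal (c₂ * (R/r) ^ α) :=
        Finset.sum_le_sum fun y hy =>
          hb (g y) (hgE y (Finset.mem_filter.1 hy).2).1 r h0 hrρ
    _ = (t'.card : ℝ≥0∞) * ENNReal.ofReal (c₂ * (R/r) ^ α) := by
        rw [Finset.sum_const, nsmul_eq_mul]
    _ ≤ ENNReal.ofReal (max (t'.card : ℝ) 1 * (c₂ * (R/r) ^ α)) := by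
        rw [ENNReal.ofReal_mul (by positivity : (0:ℝ) ≤ max (t'.card : ℝ) 1)]
        gcongr ?_ * _
        rw [← ENNReal.ofReal_natCast t'.card]
        exact ENNReal.ofReal_le_ofReal (le_max_left _ _)

end Aux

set_option maxHeartbeats 1000000 in
/-- The `Φ`-dimensions bracket the box dimensions. -/
theorem phiDim_le_boxDim_le_phiDim {X : Type*} [MetricSpace X] (hX : IsDoublingSpace X)
    (E : Set X) (hE : Bornology.IsBounded E) (Φ : ℝ → ℝ) (hΦ : IsDimensionFunction Φ) :
    lowerPhiDim Φ E ≤ lowerBoxDim E ∧ lowerBoxDim E ≤ upperBoxDim E ∧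
    upperBoxDim E ≤ upperPhiDim Φ E := by
  classical
  haveI hlne : (𝓝[Ioo (0:ℝ) 1] (0:ℝ)).NeBot := by
    refine mem_closure_iff_nhdsWithin_neBot.1 ?_
    rw [closure_Ioo (by norm_num : (0:ℝ) ≠ 1)]
    exact ⟨le_refl 0, by norm_num⟩
  rcases E.eq_empty_or_nonempty with hEe | hEne
  · subst hEe
    have hF : (fun r : ℝ => Real.log (coverNumber r (∅ : Set X)).toReal / |Real.log r|) =
        fun _ => (0:ℝ) := by
      funext r; rw [coverNumber_empty]; simp
    have hub : upperBoxDim (∅ : Set X) = 0 := by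
      unfold upperBoxDim; rw [hF]; exact limsup_const 0
    have hlb : lowerBoxDim (∅ : Set X) = 0 := by
      unfold lowerBoxDim; rw [hF]; exact liminf_const 0
    have hlp : lowerPhiDim Φ (∅ : Set X) = 0 := by
      unfold lowerPhiDim
      have h : {α : ℝ | ∃ c₁ > (0:ℝ), ∃ c₂ > (0:ℝ), ∀ r R : ℝ,
          0 < r → r ≤ R ^ (1 + Φ R) → R ^ (1 + Φ R) ≤ R → R < c₁ → ∀ z ∈ (∅ : Set X),
            ENNReal.ofReal (c₂ * (R / r) ^ α) ≤ coverNumber r (closedBall z R ∩ (∅ : Set X))} =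
          univ :=
        eq_univ_of_forall fun α =>
          ⟨1, one_pos, 1, one_pos, fun r R _ _ _ _ z hz => absurd hz (notMem_empty z)⟩
      rw [h, Real.sSup_univ]
    have hup : upperPhiDim Φ (∅ : Set X) = 0 := by
      unfold upperPhiDim
      have h : {α : ℝ | ∃ c₁ > (0:ℝ), ∃ c₂ > (0:ℝ), ∀ r R : ℝ,
          0 < r → r ≤ R ^ (1 + Φ R) → R ^ (1 + Φ R) ≤ R → R < c₁ → ∀ z ∈ (∅ : Set X),
            coverNumber r (closedBall z R ∩ (∅ : Set X)) ≤ ENNReal.ofReal (c₂ * (R / r) ^ α)} =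
          univ :=
        eq_univ_of_forall fun α =>
          ⟨1, one_pos, 1, one_pos, fun r R _ _ _ _ z hz => absurd hz (notMem_empty z)⟩
      rw [h]
      exact Real.sInf_of_not_bddBelow (not_bddBelow_univ)
    rw [hub, hlb, hlp, hup]
    exact ⟨le_refl 0, le_refl 0, le_refl 0⟩
  · obtain ⟨z₀, hz₀⟩ := hEne
    obtain ⟨M, hM1, hd⟩ := hX
    obtain ⟨D₀, hD₀⟩ := hE.subset_closedBall z₀
    set D : ℝ := max D₀ 1 with hDdef
    have hD1 : (1:ℝ) ≤ D := le_max_right _ _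
    have hED : E ⊆ closedBall z₀ D :=
      hD₀.trans (closedBall_subset_closedBall (le_max_left _ _))
    set s₀ : ℝ := Real.logb 2 M with hs₀def
    have hM1R : (1:ℝ) ≤ (M:ℝ) := by exact_mod_cast hM1
    have hM0R : (0:ℝ) < (M:ℝ) := lt_of_lt_of_le one_pos hM1R
    have hs₀ : 0 ≤ s₀ := Real.logb_nonneg one_lt_two hM1R
    set F : ℝ → ℝ := fun r => Real.log (coverNumber r E).toReal / |Real.log r| with hFdef
    have hlbF : lowerBoxDim E = liminf F (𝓝[Ioo (0:ℝ) 1] 0) := rfl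
    have hubF : upperBoxDim E = limsup F (𝓝[Ioo (0:ℝ) 1] 0) := rfl
    have hEne : E.Nonempty := ⟨z₀, hz₀⟩
    have hglob : ∀ r : ℝ, 0 < r → r < 1 →
        coverNumber r E ≤ ENNReal.ofReal ((M:ℝ) * (D/r) ^ s₀) :=
      fun r h0 h1 => coverNumber_le_doubling hM1 hd h0 (h1.le.trans hD1) hED
    have hfin : ∀ r : ℝ, 0 < r → r < 1 → coverNumber r E ≠ ⊤ :=
      fun r h0 h1 => ne_top_of_le_ne_top ENNReal.ofReal_ne_top (hglob r h0 h1)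
    have htR1 : ∀ r : ℝ, 0 < r → r < 1 → 1 ≤ (coverNumber r E).toReal := by
      intro r h0 h1
      have h := ENNReal.toReal_mono (hfin r h0 h1) (one_le_coverNumber hEne (r := r))
      simpa using h
    have habs : ∀ r : ℝ, 0 < r → r < 1 → |Real.log r| = -Real.log r :=
      fun r h0 h1 => abs_of_neg (Real.log_neg h0 h1)
    have hLpos : ∀ r : ℝ, 0 < r → r < 1 → 0 < -Real.log r :=
      fun r h0 h1 => neg_pos.2 (Real.log_neg h0 h1)
    have hL2 : ∀ r : ℝ, 0 < r → r ≤ 1/2 → Real.log 2 ≤ -Real.log r := by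
      intro r h0 h12
      rw [← Real.log_inv]
      apply Real.log_le_log two_pos
      rw [le_inv_comm₀ two_pos h0]
      linarith
    set C₀ : ℝ := Real.log M + s₀ * Real.log D with hC₀def
    have hC₀ : 0 ≤ C₀ :=
      add_nonneg (Real.log_nonneg hM1R) (mul_nonneg hs₀ (Real.log_nonneg hD1))
    set Bnd : ℝ := s₀ + C₀ / Real.log 2 with hBnddef
    have hFle : ∀ r : ℝ, 0 < r → r ≤ 1/2 → F r ≤ Bnd := by
      intro r h0 h12
      have h1 : r < 1 := lt_of_le_of_lt h12 (by norm_num)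
      have hL := hL2 r h0 h12
      have hl2 : (0:ℝ) < Real.log 2 := Real.log_pos one_lt_two
      have hLp : 0 < -Real.log r := lt_of_lt_of_le hl2 hL
      have hN : (coverNumber r E).toReal ≤ (M:ℝ) * (D/r) ^ s₀ :=
        ENNReal.toReal_le_of_le_ofReal (by positivity) (hglob r h0 h1)
      have hDpos : (0:ℝ) < D / r := by positivity
      have hlogN : Real.log (coverNumber r E).toReal ≤ C₀ + s₀ * (-Real.log r) := by
        calc Real.log (coverNumber r E).toReal ≤ Real.log ((M:ℝ) * (D/r) ^ s₀) :=
              Real.log_le_log (by linarith [htR1 r h0 h1]) hN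
          _ = Real.log M + s₀ * (Real.log D - Real.log r) := by
              rw [Real.log_mul (by positivity) (by positivity), Real.log_rpow hDpos,
                Real.log_div (by positivity) (ne_of_gt h0)]
          _ = C₀ + s₀ * (-Real.log r) := by rw [hC₀def]; ring
      show Real.log (coverNumber r E).toReal / |Real.log r| ≤ Bnd
      rw [habs r h0 h1, div_le_iff₀ hLp, hBnddef]
      have hkey : C₀ ≤ C₀ / Real.log 2 * (-Real.log r) := by
        rw [div_mul_eq_mul_div, le_div_iff₀ hl2]
        exact mul_le_mul_of_nonneg_left hL hC₀
      have hx : (s₀ + C₀ / Real.log 2) * (-Real.log r)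
          = s₀ * (-Real.log r) + C₀ / Real.log 2 * (-Real.log r) := by ring
      rw [hx]
      linarith [hlogN, hkey]
    have hev : ∀ δ : ℝ, 0 < δ → ∀ᶠ r in 𝓝[Ioo (0:ℝ) 1] (0:ℝ), 0 < r ∧ r < 1 ∧ r < δ := by
      intro δ hδ
      have h1 : ∀ᶠ r in 𝓝[Ioo (0:ℝ) 1] (0:ℝ), r ∈ Ioo (0:ℝ) 1 := eventually_mem_nhdsWithin
      have h2 : ∀ᶠ r in 𝓝[Ioo (0:ℝ) 1] (0:ℝ), r < δ :=
        (eventually_lt_nhds hδ).filter_mono nhdsWithin_le_nhds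
      filter_upwards [h1, h2] with r hr hrδ
      exact ⟨hr.1, hr.2, hrδ⟩
    have hFev_le : ∀ᶠ r in 𝓝[Ioo (0:ℝ) 1] (0:ℝ), F r ≤ Bnd := by
      filter_upwards [hev (1/2) (by norm_num)] with r hr
      exact hFle r hr.1 hr.2.2.le
    have hFev_ge : ∀ᶠ r in 𝓝[Ioo (0:ℝ) 1] (0:ℝ), 0 ≤ F r := by
      filter_upwards [hev 1 one_pos] with r hr
      have h1 := htR1 r hr.1 hr.2.1
      exact div_nonneg (Real.log_nonneg h1) (abs_nonneg _)
    have hBle : IsBoundedUnder (· ≤ ·) (𝓝[Ioo (0:ℝ) 1] (0:ℝ)) F := ⟨Bnd, hFev_le⟩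
    have hBge : IsBoundedUnder (· ≥ ·) (𝓝[Ioo (0:ℝ) 1] (0:ℝ)) F := ⟨0, hFev_ge⟩
    have hlbd0 : 0 ≤ lowerBoxDim E := by
      rw [hlbF]
      exact le_liminf_of_le hBle.isCoboundedUnder_ge hFev_ge
    have partB : lowerBoxDim E ≤ upperBoxDim E := by
      rw [hlbF, hubF]
      exact liminf_le_limsup hBle hBge
    have partA : lowerPhiDim Φ E ≤ lowerBoxDim E := by
      refine Real.sSup_le ?_ hlbd0
      intro α hα
      obtain ⟨c₁, hc₁, c₂, hc₂, hbound⟩ := hα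
      obtain ⟨R, hR0, hR1, hRc₁, hρ0, hρR⟩ := aux_R hΦ.1 hc₁
      have key : ∀ r : ℝ, 0 < r → r ≤ R ^ (1 + Φ R) →
          ENNReal.ofReal (c₂ * (R/r) ^ α) ≤ coverNumber r E := fun r h0 hrρ =>
        le_trans (hbound r R h0 hrρ hρR hRc₁ z₀ hz₀) (coverNumber_mono inter_subset_right)
      refine aux_le_of_forall_pos fun ε hε => ?_
      have h : α - ε ≤ lowerBoxDim E := by
        rw [hlbF]
        exact le_liminf_of_le hBle.isCoboundedUnder_ge
          (aux_ev_ge hc₂ hR0 hρ0 hε hfin key)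
      linarith
    have hSup_mem : s₀ ∈ {α : ℝ | ∃ c₁ > (0:ℝ), ∃ c₂ > (0:ℝ), ∀ r R : ℝ,
        0 < r → r ≤ R ^ (1 + Φ R) → R ^ (1 + Φ R) ≤ R → R < c₁ → ∀ z ∈ E,
          coverNumber r (closedBall z R ∩ E) ≤ ENNReal.ofReal (c₂ * (R / r) ^ α)} := by
      refine ⟨1, one_pos, (M:ℝ), hM0R, fun r R h0 hrρ hρR hR1 z hz => ?_⟩
      exact coverNumber_le_doubling hM1 hd h0 (hrρ.trans hρR) inter_subset_left
    have partC : upperBoxDim E ≤ upperPhiDim Φ E := by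
      refine le_csInf ⟨s₀, hSup_mem⟩ ?_
      intro α hα
      obtain ⟨c₁, hc₁, c₂, hc₂, hbound⟩ := hα
      obtain ⟨R, hR0, hR1, hRc₁, hρ0, hρR⟩ := aux_R hΦ.1 hc₁
      have hfinR : coverNumber (R/2) E ≠ ⊤ := hfin (R/2) (by linarith) (by linarith)
      obtain ⟨t, htcov, -⟩ := exists_cover hfinR
      obtain ⟨K, hK1, hKb⟩ := aux_cover_bound hc₂ hR0 t htcov
        (fun z hz r h0 hrρ => hbound r R h0 hrρ hρR hRc₁ z hz)
      have key : ∀ r : ℝ, 0 < r → r ≤ R ^ (1 + Φ R) →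
          (coverNumber r E).toReal ≤ K * (c₂ * (R/r) ^ α) := fun r h0 hrρ =>
        ENNReal.toReal_le_of_le_ofReal
          (mul_nonneg (by linarith) (mul_nonneg hc₂.le
            (Real.rpow_nonneg (div_nonneg hR0.le h0.le) α))) (hKb r h0 hrρ)
      refine aux_le_of_forall_pos fun ε hε => ?_
      rw [hubF]
      exact limsup_le_of_le hBge.isCoboundedUnder_le
        (aux_ev_le hK1 hc₂ hR0 hρ0 hε htR1 key)
    exact ⟨partA, partB, partC⟩

end
end

section
/- Let X be a doubling metric space and Φ a dimension function with Φ(x) → δ as x → 0, where 0 < δ < ∞. Put θ = (1+δ)^{-1}. Then for every set E ⊆ X, the upper Φ-dimension of E equals the upper θ-Assouad spectrum of E, and the lower Φ-dimension of E equals the lower θ-Assouad spectrum of E. -/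
open Set Metric Filter Topology
open scoped ENNReal

noncomputable section

namespace CoverAux

variable {X : Type*} [PseudoMetricSpace X]




lemma coverNumber_le {r : ℝ} {E : Set X} (s : Finset X)
    (hs : E ⊆ ⋃ x ∈ s, closedBall x r) : coverNumber r E ≤ s.card :=
  iInf₂_le s hs

lemma le_coverNumber {r : ℝ} {E : Set X} {a : ℝ≥0∞}
    (h : ∀ s : Finset X, E ⊆ ⋃ x ∈ s, closedBall x r → a ≤ s.card) :
    a ≤ coverNumber r E :=
  le_iInf₂ h

lemma coverNumber_mono_set {r : ℝ} {E F : Set X} (h : E ⊆ F) :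
    coverNumber r E ≤ coverNumber r F :=
  le_coverNumber fun s hs => coverNumber_le s (h.trans hs)

lemma coverNumber_anti {r r' : ℝ} (h : r ≤ r') (E : Set X) :
    coverNumber r' E ≤ coverNumber r E :=
  le_coverNumber fun s hs => coverNumber_le s
    (hs.trans (iUnion₂_mono fun x _ => closedBall_subset_closedBall h))

lemma one_le_coverNumber {r : ℝ} {E : Set X} (hE : E.Nonempty) :
    1 ≤ coverNumber r E := by
  refine le_coverNumber fun s hs => ?_
  obtain ⟨x, hx⟩ := hE
  obtain ⟨y, hy, -⟩ := mem_iUnion₂.1 (hs hx)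
  exact_mod_cast Finset.card_pos.2 ⟨y, hy⟩

lemma exists_minimal_cover {r : ℝ} {E : Set X}
    (h : ∃ s : Finset X, E ⊆ ⋃ x ∈ s, closedBall x r) :
    ∃ s : Finset X, (E ⊆ ⋃ x ∈ s, closedBall x r) ∧
      (s.card : ℝ≥0∞) = coverNumber r E := by
  have hne : {n : ℕ | ∃ s : Finset X, (E ⊆ ⋃ x ∈ s, closedBall x r) ∧ s.card = n}.Nonempty := by
    obtain ⟨s, hs⟩ := h
    exact ⟨s.card, s, hs, rfl⟩
  obtain ⟨s, hs, hcard⟩ := Nat.sInf_mem hne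
  refine ⟨s, hs, le_antisymm ?_ (coverNumber_le s hs)⟩
  refine le_coverNumber fun t ht => ?_
  have : sInf {n : ℕ | ∃ s : Finset X, (E ⊆ ⋃ x ∈ s, closedBall x r) ∧ s.card = n} ≤ t.card :=
    Nat.sInf_le ⟨t, ht, rfl⟩
  exact_mod_cast hcard ▸ Nat.cast_le.2 this

lemma coverNumber_eq_top {r : ℝ} {E : Set X}
    (h : ¬ ∃ s : Finset X, E ⊆ ⋃ x ∈ s, closedBall x r) :
    coverNumber r E = ⊤ := by
  refine le_antisymm le_top (le_coverNumber fun s hs => absurd ⟨s, hs⟩ h)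

lemma coverNumber_union_le {r : ℝ} (A B : Set X) :
    coverNumber r (A ∪ B) ≤ coverNumber r A + coverNumber r B := by
  classical
  by_cases hA : ∃ s : Finset X, A ⊆ ⋃ x ∈ s, closedBall x r
  · by_cases hB : ∃ s : Finset X, B ⊆ ⋃ x ∈ s, closedBall x r
    · obtain ⟨s, hs, hscard⟩ := exists_minimal_cover hA
      obtain ⟨t, ht, htcard⟩ := exists_minimal_cover hB
      rw [← hscard, ← htcard]
      have hcov : A ∪ B ⊆ ⋃ x ∈ (s ∪ t : Finset X), closedBall x r := by
        refine union_subset (hs.trans ?_) (ht.trans ?_) <;>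
          exact iUnion₂_mono' fun x hx => ⟨x, by simp [hx], subset_rfl⟩
      calc coverNumber r (A ∪ B) ≤ ((s ∪ t).card : ℝ≥0∞) := coverNumber_le _ hcov
        _ ≤ (s.card : ℝ≥0∞) + t.card := by exact_mod_cast Nat.cast_le.2 (Finset.card_union_le s t)
    · rw [coverNumber_eq_top hB]; simp
  · rw [coverNumber_eq_top hA]; simp

lemma coverNumber_biUnion_le {r : ℝ} {ι : Type*} (s : Finset ι) (f : ι → Set X) :
    coverNumber r (⋃ i ∈ s, f i) ≤ ∑ i ∈ s, coverNumber r (f i) := by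
  classical
  induction s using Finset.induction_on with
  | empty => simpa using coverNumber_le (E := (∅ : Set X)) ∅ (by simp)
  | @insert a s ha ih =>
    rw [Finset.sum_insert ha]
    refine le_trans (le_of_eq (by rw [Finset.set_biUnion_insert])) ?_
    exact (coverNumber_union_le _ _).trans (add_le_add le_rfl ih)




lemma doubling_pow {M : ℕ} (hM : 1 ≤ M)
    (hX : ∀ (x : X) (R : ℝ), ∃ s : Finset X, s.card ≤ M ∧
      closedBall x R ⊆ ⋃ y ∈ s, closedBall y (R / 2)) :
    ∀ (k : ℕ) (x : X) (R : ℝ),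
      coverNumber (R / 2 ^ k) (closedBall x R) ≤ (M : ℝ≥0∞) ^ k := by
  intro k
  induction k with
  | zero =>
    intro x R
    simpa using coverNumber_le {x} (by simp [Set.subset_def])
  | succ k ih =>
    intro x R
    obtain ⟨s, hcard, hcov⟩ := hX x R
    calc coverNumber (R / 2 ^ (k + 1)) (closedBall x R)
        ≤ coverNumber (R / 2 ^ (k + 1)) (⋃ y ∈ s, closedBall y (R / 2)) :=
          coverNumber_mono_set hcov
      _ ≤ ∑ y ∈ s, coverNumber (R / 2 ^ (k + 1)) (closedBall y (R / 2)) :=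
          coverNumber_biUnion_le s _
      _ ≤ ∑ _y ∈ s, (M : ℝ≥0∞) ^ k := by
          refine Finset.sum_le_sum fun y _ => ?_
          have : R / 2 ^ (k + 1) = (R / 2) / 2 ^ k := by ring
          rw [this]; exact ih y (R / 2)
      _ = s.card * (M : ℝ≥0∞) ^ k := by rw [Finset.sum_const, nsmul_eq_mul]
      _ ≤ (M : ℝ≥0∞) ^ (k + 1) := by
          rw [pow_succ']
          gcongr

lemma doubling_ball_bound (hX : IsDoublingSpace X) :
    ∃ C s : ℝ, 1 ≤ C ∧ 0 ≤ s ∧ ∀ (x : X) (r r' : ℝ), 0 < r' → r' ≤ r →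
      coverNumber r' (closedBall x r) ≤ ENNReal.ofReal (C * (r / r') ^ s) := by
  obtain ⟨M, hM, hcov⟩ := hX
  have hM0 : (0:ℝ) < M := by exact_mod_cast Nat.lt_of_lt_of_le Nat.zero_lt_one hM
  have hM1 : (1:ℝ) ≤ M := by exact_mod_cast hM
  set s : ℝ := Real.logb 2 M with hs
  have hs0 : 0 ≤ s := Real.logb_nonneg one_lt_two hM1
  refine ⟨M, s, hM1, hs0, fun x r r' hr' hrr => ?_⟩
  have hr : 0 < r := hr'.trans_le hrr
  have h1 : 1 ≤ r / r' := (one_le_div hr').2 hrr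
  have hq0 : 0 < r / r' := lt_of_lt_of_le one_pos h1
  set k : ℕ := ⌈Real.logb 2 (r / r')⌉₊ with hk
  have hlogb0 : 0 ≤ Real.logb 2 (r / r') := Real.logb_nonneg one_lt_two h1
  have hk1 : Real.logb 2 (r / r') ≤ (k : ℝ) := Nat.le_ceil _
  have hk2 : (k : ℝ) ≤ Real.logb 2 (r / r') + 1 := (Nat.ceil_lt_add_one hlogb0).le
  have hqk : r / r' ≤ (2:ℝ) ^ (k:ℝ) := by
    calc r / r' = (2:ℝ) ^ Real.logb 2 (r / r') :=
          (Real.rpow_logb two_pos (by norm_num) hq0).symm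
      _ ≤ (2:ℝ) ^ (k:ℝ) := Real.rpow_le_rpow_of_exponent_le one_le_two hk1
  have hqk' : r / r' ≤ (2:ℝ) ^ k := by rwa [← Real.rpow_natCast 2 k]
  have hrk : r / 2 ^ k ≤ r' := by
    rw [div_le_iff₀ (by positivity)]
    rw [div_le_iff₀ hr'] at hqk'
    linarith [hqk']
  have step1 : coverNumber r' (closedBall x r) ≤ (M : ℝ≥0∞) ^ k :=
    (coverNumber_anti hrk _).trans (doubling_pow hM hcov k x r)
  refine step1.trans ?_
  have heq : (M : ℝ≥0∞) ^ k = ENNReal.ofReal ((M:ℝ) ^ k) := by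
    rw [ENNReal.ofReal_pow hM0.le, ENNReal.ofReal_natCast]
  rw [heq]
  refine ENNReal.ofReal_le_ofReal ?_
  have h2s : (2:ℝ) ^ s = M := Real.rpow_logb two_pos (by norm_num) hM0
  have e1 : ((M:ℝ)) ^ k = ((2:ℝ) ^ (k:ℝ)) ^ s := by
    rw [← h2s, ← Real.rpow_natCast ((2:ℝ) ^ s) k, ← Real.rpow_mul (by norm_num),
      ← Real.rpow_mul (by norm_num), mul_comm]
  rw [e1]
  have h2k : (2:ℝ) ^ (k:ℝ) ≤ r / r' * 2 := by
    calc (2:ℝ) ^ (k:ℝ) ≤ (2:ℝ) ^ (Real.logb 2 (r / r') + 1) :=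
          Real.rpow_le_rpow_of_exponent_le one_le_two hk2
      _ = r / r' * 2 := by
          rw [Real.rpow_add two_pos, Real.rpow_logb two_pos (by norm_num) hq0, Real.rpow_one]
  calc ((2:ℝ) ^ (k:ℝ)) ^ s ≤ (r / r' * 2) ^ s :=
        Real.rpow_le_rpow (Real.rpow_nonneg (by norm_num) _) h2k hs0
    _ = (r / r') ^ s * (2:ℝ) ^ s := Real.mul_rpow hq0.le (by norm_num)
    _ = (M:ℝ) * (r / r') ^ s := by rw [h2s, mul_comm]


lemma coverNumber_le_mul {r r' : ℝ} {K : ℝ≥0∞} (hK : K ≠ 0)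
    (hball : ∀ x : X, coverNumber r' (closedBall x r) ≤ K) (S : Set X) :
    coverNumber r' S ≤ coverNumber r S * K := by
  by_cases h : ∃ s : Finset X, S ⊆ ⋃ x ∈ s, closedBall x r
  · obtain ⟨s, hs, hcard⟩ := exists_minimal_cover h
    calc coverNumber r' S ≤ coverNumber r' (⋃ x ∈ s, closedBall x r) :=
          coverNumber_mono_set hs
      _ ≤ ∑ x ∈ s, coverNumber r' (closedBall x r) := coverNumber_biUnion_le s _
      _ ≤ ∑ _x ∈ s, K := Finset.sum_le_sum fun x _ => hball x
      _ = (s.card : ℝ≥0∞) * K := by rw [Finset.sum_const, nsmul_eq_mul]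
      _ = coverNumber r S * K := by rw [hcard]
  · rw [coverNumber_eq_top h, ENNReal.top_mul hK]
    exact le_top




/-- The set whose infimum is the upper `Φ`-dimension. -/
def USet (Φ : ℝ → ℝ) (E : Set X) : Set ℝ :=
  {α : ℝ | ∃ c₁ > (0:ℝ), ∃ c₂ > (0:ℝ), ∀ r R : ℝ,
    0 < r → r ≤ R ^ (1 + Φ R) → R ^ (1 + Φ R) ≤ R → R < c₁ → ∀ z ∈ E,
      coverNumber r (closedBall z R ∩ E) ≤ ENNReal.ofReal (c₂ * (R / r) ^ α)}

/-- The set whose supremum is the lower `Φ`-dimension. -/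
def LSet (Φ : ℝ → ℝ) (E : Set X) : Set ℝ :=
  {α : ℝ | ∃ c₁ > (0:ℝ), ∃ c₂ > (0:ℝ), ∀ r R : ℝ,
    0 < r → r ≤ R ^ (1 + Φ R) → R ^ (1 + Φ R) ≤ R → R < c₁ → ∀ z ∈ E,
      ENNReal.ofReal (c₂ * (R / r) ^ α) ≤ coverNumber r (closedBall z R ∩ E)}

lemma rpow_one_add_le {R φ : ℝ} (hR : 0 < R) (hR1 : R ≤ 1) (hφ : 0 ≤ φ) :
    R ^ (1 + φ) ≤ R := by
  calc R ^ (1 + φ) ≤ R ^ (1:ℝ) :=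
        Real.rpow_le_rpow_of_exponent_ge hR hR1 (by linarith)
    _ = R := Real.rpow_one R

lemma close_of_tendsto {Φ : ℝ → ℝ} {δ : ℝ}
    (hlim : Tendsto Φ (nhdsWithin 0 (Ioo 0 1)) (nhds δ)) {η : ℝ} (hη : 0 < η) :
    ∃ c : ℝ, 0 < c ∧ c ≤ 1 ∧ ∀ R : ℝ, 0 < R → R < c → |Φ R - δ| < η := by
  rw [Metric.tendsto_nhdsWithin_nhds] at hlim
  obtain ⟨c', hc', H⟩ := hlim η hη
  refine ⟨min c' 1, lt_min hc' one_pos, min_le_right _ _, fun R hR hRc => ?_⟩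
  have h1 : R < 1 := hRc.trans_le (min_le_right _ _)
  have h2 : dist R 0 < c' := by
    rw [Real.dist_eq, sub_zero, abs_of_pos hR]
    exact hRc.trans_le (min_le_left _ _)
  have := H ⟨hR, h1⟩ h2
  rwa [Real.dist_eq] at this

lemma nonneg_of_mem_USet {Φ : ℝ → ℝ} (hΦ : ∀ x ∈ Ioo (0:ℝ) 1, 0 ≤ Φ x) {E : Set X}
    (hE : E.Nonempty) {α : ℝ} (hα : α ∈ USet Φ E) : 0 ≤ α := by
  by_contra hneg
  push_neg at hneg
  set β : ℝ := -α with hβdef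
  have hβ : 0 < β := by simp [hβdef]; linarith
  obtain ⟨c₁, hc₁, c₂, hc₂, H⟩ := hα
  set R : ℝ := min c₁ 1 / 2 with hRdef
  have hR : 0 < R := by positivity
  have hR1 : R < 1 := by
    have : min c₁ 1 ≤ 1 := min_le_right _ _
    rw [hRdef]; linarith
  have hRc : R < c₁ := by
    have : min c₁ 1 ≤ c₁ := min_le_left _ _
    rw [hRdef]; linarith
  have hΦR : 0 ≤ Φ R := hΦ R ⟨hR, hR1⟩
  set u : ℝ := min (R ^ Φ R) ((1 / (c₂ + 1)) ^ (1 / β)) with hudef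
  have hu : 0 < u := lt_min (Real.rpow_pos_of_pos hR _) (Real.rpow_pos_of_pos (by positivity) _)
  set r : ℝ := R * u with hrdef
  have hr : 0 < r := by positivity
  have hrle : r ≤ R ^ (1 + Φ R) := by
    rw [hrdef, Real.rpow_add hR, Real.rpow_one]
    exact mul_le_mul_of_nonneg_left (min_le_left _ _) hR.le
  obtain ⟨z, hz⟩ := hE
  have hkey := H r R hr hrle (rpow_one_add_le hR hR1.le hΦR) hRc z hz
  have hone : (1:ℝ≥0∞) ≤ coverNumber r (closedBall z R ∩ E) :=
    one_le_coverNumber ⟨z, mem_closedBall_self hR.le, hz⟩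
  have h1le : (1:ℝ) ≤ c₂ * (R / r) ^ α :=
    ENNReal.one_le_ofReal.1 (hone.trans hkey)
  have hRr : R / r = 1 / u := by
    rw [hrdef]; field_simp
  have hpow : (R / r) ^ α = u ^ β := by
    rw [hRr, one_div, Real.inv_rpow hu.le, ← Real.rpow_neg hu.le, hβdef]
  have hub : u ^ β ≤ 1 / (c₂ + 1) := by
    calc u ^ β ≤ ((1 / (c₂ + 1)) ^ (1 / β)) ^ β :=
          Real.rpow_le_rpow hu.le (min_le_right _ _) hβ.le
      _ = 1 / (c₂ + 1) := by
          rw [← Real.rpow_mul (by positivity), one_div_mul_cancel hβ.ne', Real.rpow_one]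
  have : c₂ * (R / r) ^ α < 1 := by
    rw [hpow]
    calc c₂ * u ^ β ≤ c₂ * (1 / (c₂ + 1)) :=
          mul_le_mul_of_nonneg_left hub hc₂.le
      _ < 1 := by rw [mul_one_div, div_lt_one (by linarith)]; linarith
  linarith

lemma nonpos_mem_LSet (Φ : ℝ → ℝ) {E : Set X} (hE : E.Nonempty) {α : ℝ} (hα : α ≤ 0) :
    α ∈ LSet Φ E := by
  refine ⟨1, one_pos, 1, one_pos, fun r R hr h1 h2 _ z hz => ?_⟩
  have hR : 0 < R := hr.trans_le (h1.trans h2)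
  have hRr : 1 ≤ R / r := (one_le_div hr).2 (h1.trans h2)
  refine le_trans ?_ (one_le_coverNumber ⟨z, mem_closedBall_self hR.le, hz⟩)
  rw [one_mul]
  exact ENNReal.ofReal_le_one.2 (Real.rpow_le_one_of_one_le_of_nonpos hRr hα)


lemma upper_transfer {Φ₁ Φ₂ : ℝ → ℝ}
    (h₁ : ∀ x ∈ Ioo (0:ℝ) 1, 0 ≤ Φ₁ x) (h₂ : ∀ x ∈ Ioo (0:ℝ) 1, 0 ≤ Φ₂ x)
    {δ : ℝ} (hδ : 0 < δ)
    (hlim₁ : Tendsto Φ₁ (nhdsWithin 0 (Ioo 0 1)) (nhds δ))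
    (hlim₂ : Tendsto Φ₂ (nhdsWithin 0 (Ioo 0 1)) (nhds δ))
    {E : Set X} (hE : E.Nonempty) {α ε : ℝ} (hα : α ∈ USet Φ₁ E) (hε : 0 < ε) :
    α + ε ∈ USet Φ₂ E := by
  have hα0 : 0 ≤ α := nonneg_of_mem_USet h₁ hE hα
  obtain ⟨c₁, hc₁, c₂, hc₂, H⟩ := hα
  set η : ℝ := δ * ε / (2 * α + ε + 1) with hηdef
  have hden : 0 < 2 * α + ε + 1 := by linarith
  have hη : 0 < η := div_pos (mul_pos hδ hε) hden
  have hηeq : η * (2 * α + ε + 1) = δ * ε := div_mul_cancel₀ _ hden.ne'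
  obtain ⟨c₃, hc₃, hc₃1, H₃⟩ := close_of_tendsto hlim₁ hη
  obtain ⟨c₄, hc₄, hc₄1, H₄⟩ := close_of_tendsto hlim₂ hη
  refine ⟨min c₁ (min c₃ c₄), by positivity, c₂, hc₂, fun r R hr hle1 hle2 hRc z hz => ?_⟩
  have hR : 0 < R := hr.trans_le (hle1.trans hle2)
  have hRc₁ : R < c₁ := hRc.trans_le (min_le_left _ _)
  have hRc₃ : R < c₃ := hRc.trans_le ((min_le_right _ _).trans (min_le_left _ _))
  have hRc₄ : R < c₄ := hRc.trans_le ((min_le_right _ _).trans (min_le_right _ _))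
  have hR1 : R < 1 := hRc₃.trans_le hc₃1
  have hφ₁ := abs_lt.1 (H₃ R hR hRc₃)
  have hφ₂ := abs_lt.1 (H₄ R hR hRc₄)
  have hΦ₁R : 0 ≤ Φ₁ R := h₁ R ⟨hR, hR1⟩
  have hΦ₂R : 0 ≤ Φ₂ R := h₂ R ⟨hR, hR1⟩
  have hRr1 : 1 ≤ R / r := (one_le_div hr).2 (hle1.trans hle2)
  by_cases hcase : r ≤ R ^ (1 + Φ₁ R)
  · have key := H r R hr hcase (rpow_one_add_le hR hR1.le hΦ₁R) hRc₁ z hz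
    refine key.trans (ENNReal.ofReal_le_ofReal (mul_le_mul_of_nonneg_left
      (Real.rpow_le_rpow_of_exponent_le hRr1 (by linarith)) hc₂.le))
  · push_neg at hcase
    set r' : ℝ := R ^ (1 + Φ₁ R) with hr'def
    have hr'0 : 0 < r' := Real.rpow_pos_of_pos hR _
    have key := H r' R hr'0 le_rfl (rpow_one_add_le hR hR1.le hΦ₁R) hRc₁ z hz
    have mono : coverNumber r (closedBall z R ∩ E) ≤ coverNumber r' (closedBall z R ∩ E) :=
      coverNumber_anti hcase.le _
    refine (mono.trans key).trans (ENNReal.ofReal_le_ofReal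
      (mul_le_mul_of_nonneg_left ?_ hc₂.le))
    -- real inequality : (R/r')^α ≤ (R/r)^(α+ε)
    have e1 : R / r' = R ^ (-(Φ₁ R)) := by
      have : (-(Φ₁ R)) = 1 - (1 + Φ₁ R) := by ring
      rw [this, Real.rpow_sub hR, Real.rpow_one, hr'def]
    have e2 : (R / r') ^ α = R ^ (-(Φ₁ R) * α) := by
      rw [e1, ← Real.rpow_mul hR.le]
    have e3 : R / R ^ (1 + Φ₂ R) = R ^ (-(Φ₂ R)) := by
      have : (-(Φ₂ R)) = 1 - (1 + Φ₂ R) := by ring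
      rw [this, Real.rpow_sub hR, Real.rpow_one]
    have hkey : Φ₁ R * α ≤ Φ₂ R * (α + ε) := by
      have hb1 : Φ₁ R * α ≤ (δ + η) * α :=
        mul_le_mul_of_nonneg_right (by linarith [hφ₁.2]) hα0
      have hb2 : (δ - η) * (α + ε) ≤ Φ₂ R * (α + ε) :=
        mul_le_mul_of_nonneg_right (by linarith [hφ₂.1]) (by linarith)
      nlinarith [hη.le]
    calc (R / r') ^ α = R ^ (-(Φ₁ R) * α) := e2
      _ ≤ R ^ (-(Φ₂ R) * (α + ε)) :=
          Real.rpow_le_rpow_of_exponent_ge hR hR1.le (by nlinarith)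
      _ = (R ^ (-(Φ₂ R))) ^ (α + ε) := Real.rpow_mul hR.le _ _
      _ ≤ (R / r) ^ (α + ε) := by
          refine Real.rpow_le_rpow (Real.rpow_nonneg hR.le _) ?_ (by linarith)
          rw [← e3]
          gcongr



lemma lower_transfer {Φ₁ Φ₂ : ℝ → ℝ}
    (h₁ : ∀ x ∈ Ioo (0:ℝ) 1, 0 ≤ Φ₁ x) (h₂ : ∀ x ∈ Ioo (0:ℝ) 1, 0 ≤ Φ₂ x)
    {δ : ℝ} (hδ : 0 < δ)
    (hlim₁ : Tendsto Φ₁ (nhdsWithin 0 (Ioo 0 1)) (nhds δ))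
    (hlim₂ : Tendsto Φ₂ (nhdsWithin 0 (Ioo 0 1)) (nhds δ))
    {C s : ℝ} (hC : 1 ≤ C) (hs : 0 ≤ s)
    (hball : ∀ (x : X) (r r' : ℝ), 0 < r' → r' ≤ r →
      coverNumber r' (closedBall x r) ≤ ENNReal.ofReal (C * (r / r') ^ s))
    {E : Set X} (hE : E.Nonempty) {α ε : ℝ} (hα : α ∈ LSet Φ₁ E) (hε : 0 < ε) :
    α - ε ∈ LSet Φ₂ E := by
  have hC0 : (0:ℝ) < C := lt_of_lt_of_le one_pos hC
  by_cases hαε : α - ε ≤ 0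
  · exact nonpos_mem_LSet Φ₂ hE hαε
  push_neg at hαε
  obtain ⟨c₁, hc₁, c₂, hc₂, H⟩ := hα
  set η : ℝ := min (δ / 2) (δ * ε / (4 * s + 4)) with hηdef
  have hη : 0 < η := lt_min (by positivity) (by positivity)
  have hη1 : η ≤ δ / 2 := min_le_left _ _
  have hη2 : η * (4 * s + 4) ≤ δ * ε :=
    (le_div_iff₀ (by positivity)).1 (min_le_right _ _)
  obtain ⟨c₃, hc₃, hc₃1, H₃⟩ := close_of_tendsto hlim₁ hη
  obtain ⟨c₄, hc₄, hc₄1, H₄⟩ := close_of_tendsto hlim₂ hη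
  refine ⟨min c₁ (min c₃ c₄), by positivity, c₂ / C, by positivity,
    fun r R hr hle1 hle2 hRc z hz => ?_⟩
  have hR : 0 < R := hr.trans_le (hle1.trans hle2)
  have hRc₁ : R < c₁ := hRc.trans_le (min_le_left _ _)
  have hRc₃ : R < c₃ := hRc.trans_le ((min_le_right _ _).trans (min_le_left _ _))
  have hRc₄ : R < c₄ := hRc.trans_le ((min_le_right _ _).trans (min_le_right _ _))
  have hR1 : R < 1 := hRc₃.trans_le hc₃1
  have hφ₁ := abs_lt.1 (H₃ R hR hRc₃)
  have hφ₂ := abs_lt.1 (H₄ R hR hRc₄)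
  have hΦ₁R : 0 ≤ Φ₁ R := h₁ R ⟨hR, hR1⟩
  have hΦ₂R : 0 ≤ Φ₂ R := h₂ R ⟨hR, hR1⟩
  have hRr1 : 1 ≤ R / r := (one_le_div hr).2 (hle1.trans hle2)
  by_cases hcase : r ≤ R ^ (1 + Φ₁ R)
  · have key := H r R hr hcase (rpow_one_add_le hR hR1.le hΦ₁R) hRc₁ z hz
    refine le_trans (ENNReal.ofReal_le_ofReal ?_) key
    exact mul_le_mul (div_le_self hc₂.le hC)
      (Real.rpow_le_rpow_of_exponent_le hRr1 (by linarith))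
      (Real.rpow_nonneg (by positivity) _) hc₂.le
  · push_neg at hcase
    set r' : ℝ := R ^ (1 + Φ₁ R) with hr'def
    have hr'0 : 0 < r' := Real.rpow_pos_of_pos hR _
    have key := H r' R hr'0 le_rfl (rpow_one_add_le hR hR1.le hΦ₁R) hRc₁ z hz
    have hqpos : 0 < C * (r / r') ^ s := by positivity
    set K : ℝ≥0∞ := ENNReal.ofReal (C * (r / r') ^ s) with hKdef
    have hK0 : K ≠ 0 := by
      simp only [hKdef, ne_eq, ENNReal.ofReal_eq_zero, not_le]
      exact hqpos
    have htrans : coverNumber r' (closedBall z R ∩ E) ≤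
        coverNumber r (closedBall z R ∩ E) * K :=
      coverNumber_le_mul hK0 (fun x => hball x r r' hr'0 hcase.le) _
    -- exponent bookkeeping
    have e1 : R / r' = R ^ (-(Φ₁ R)) := by
      have h : (-(Φ₁ R)) = 1 - (1 + Φ₁ R) := by ring
      rw [h, Real.rpow_sub hR, Real.rpow_one, hr'def]
    have eα : (R / r') ^ α = R ^ (-(Φ₁ R) * α) := by
      rw [e1, ← Real.rpow_mul hR.le]
    have hq : r / r' ≤ R ^ (Φ₂ R - Φ₁ R) := by
      rw [show Φ₂ R - Φ₁ R = (1 + Φ₂ R) - (1 + Φ₁ R) from by ring, Real.rpow_sub hR]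
      gcongr
    have hqs : (r / r') ^ s ≤ R ^ (-(2 * η * s)) := by
      calc (r / r') ^ s ≤ (R ^ (Φ₂ R - Φ₁ R)) ^ s :=
            Real.rpow_le_rpow (by positivity) hq hs
        _ = R ^ ((Φ₂ R - Φ₁ R) * s) := by rw [← Real.rpow_mul hR.le]
        _ ≤ R ^ (-(2 * η * s)) := by
            refine Real.rpow_le_rpow_of_exponent_ge hR hR1.le ?_
            nlinarith [hφ₁.1, hφ₁.2, hφ₂.1, hφ₂.2, hs, hη.le]
    have hL : (R / r) ^ (α - ε) ≤ R ^ (-(Φ₁ R) * α + Φ₁ R * ε) := by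
      calc (R / r) ^ (α - ε) ≤ (R ^ (-(Φ₁ R))) ^ (α - ε) := by
            refine Real.rpow_le_rpow (by positivity) ?_ (by linarith)
            rw [← e1]
            gcongr
        _ = R ^ (-(Φ₁ R) * (α - ε)) := by rw [← Real.rpow_mul hR.le]
        _ = R ^ (-(Φ₁ R) * α + Φ₁ R * ε) := by ring_nf
    have hexp : 2 * η * s ≤ Φ₁ R * ε := by
      have hb1 : η * ε ≤ δ / 2 * ε := mul_le_mul_of_nonneg_right hη1 hε.le
      have hb2 : (δ - η) * ε ≤ Φ₁ R * ε :=
        mul_le_mul_of_nonneg_right (by linarith [hφ₁.1]) hε.le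
      have hb3 : 0 ≤ η * s := by positivity
      linarith [hη2, hb1, hb2, hb3]
    -- the real inequality
    have hreal : c₂ / C * (R / r) ^ (α - ε) ≤ c₂ * (R / r') ^ α / (C * (r / r') ^ s) := by
      have eq2 : c₂ * (R / r') ^ α / (C * R ^ (-(2 * η * s))) =
          (c₂ / C) * R ^ (-(Φ₁ R) * α + 2 * η * s) := by
        rw [eα, show -(Φ₁ R) * α + 2 * η * s = (-(Φ₁ R) * α) - (-(2 * η * s)) from by ring,
          Real.rpow_sub hR]
        ring
      calc c₂ / C * (R / r) ^ (α - ε)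
          ≤ c₂ / C * R ^ (-(Φ₁ R) * α + Φ₁ R * ε) :=
            mul_le_mul_of_nonneg_left hL (by positivity)
        _ ≤ c₂ / C * R ^ (-(Φ₁ R) * α + 2 * η * s) :=
            mul_le_mul_of_nonneg_left
              (Real.rpow_le_rpow_of_exponent_ge hR hR1.le (by linarith)) (by positivity)
        _ = c₂ * (R / r') ^ α / (C * R ^ (-(2 * η * s))) := eq2.symm
        _ ≤ c₂ * (R / r') ^ α / (C * (r / r') ^ s) :=
            div_le_div_of_nonneg_left (by positivity) hqpos
              (mul_le_mul_of_nonneg_left hqs hC0.le)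
    calc ENNReal.ofReal (c₂ / C * (R / r) ^ (α - ε))
        ≤ ENNReal.ofReal (c₂ * (R / r') ^ α / (C * (r / r') ^ s)) :=
          ENNReal.ofReal_le_ofReal hreal
      _ = ENNReal.ofReal (c₂ * (R / r') ^ α) / K :=
          ENNReal.ofReal_div_of_pos hqpos
      _ ≤ coverNumber r' (closedBall z R ∩ E) / K := ENNReal.div_le_div_right key K
      _ ≤ coverNumber r (closedBall z R ∩ E) := ENNReal.div_le_of_le_mul htrans



lemma interleave_sInf (A B : Set ℝ) (hAB : ∀ α ∈ A, ∀ ε > (0:ℝ), α + ε ∈ B)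
    (hBA : ∀ α ∈ B, ∀ ε > (0:ℝ), α + ε ∈ A) : sInf A = sInf B := by
  rcases A.eq_empty_or_nonempty with hA | hA
  · have hB : B = ∅ := by
      rw [eq_empty_iff_forall_notMem]
      intro β hβ
      have := hBA β hβ 1 one_pos
      simp [hA] at this
    rw [hA, hB]
  · have hB : B.Nonempty := by
      obtain ⟨a, ha⟩ := hA
      exact ⟨a + 1, hAB a ha 1 one_pos⟩
    by_cases hbdd : BddBelow A
    · have hbddB : BddBelow B := by
        obtain ⟨b, hb⟩ := hbdd
        refine ⟨b - 1, fun β hβ => ?_⟩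
        have := hb (hBA β hβ 1 one_pos)
        linarith
      have key : ∀ (A' B' : Set ℝ), B'.Nonempty → BddBelow A' →
          (∀ α ∈ B', ∀ ε > (0:ℝ), α + ε ∈ A') → sInf A' ≤ sInf B' := by
        intro A' B' hB' hbdd' htr
        refine le_csInf hB' fun β hβ => ?_
        by_contra hcon
        push_neg at hcon
        have h2 := csInf_le hbdd' (htr β hβ ((sInf A' - β) / 2) (by linarith))
        linarith
      exact le_antisymm (key _ _ hB hbdd hBA) (key _ _ hA hbddB hAB)
    · have hbddB : ¬ BddBelow B := by
        rintro ⟨b, hb⟩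
        refine hbdd ⟨b - 1, fun a ha => ?_⟩
        have := hb (hAB a ha 1 one_pos)
        linarith
      rw [Real.sInf_of_not_bddBelow hbdd, Real.sInf_of_not_bddBelow hbddB]

lemma interleave_sSup (A B : Set ℝ) (hAB : ∀ α ∈ A, ∀ ε > (0:ℝ), α - ε ∈ B)
    (hBA : ∀ α ∈ B, ∀ ε > (0:ℝ), α - ε ∈ A) : sSup A = sSup B := by
  rcases A.eq_empty_or_nonempty with hA | hA
  · have hB : B = ∅ := by
      rw [eq_empty_iff_forall_notMem]
      intro β hβ
      have := hBA β hβ 1 one_pos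
      simp [hA] at this
    rw [hA, hB]
  · have hB : B.Nonempty := by
      obtain ⟨a, ha⟩ := hA
      exact ⟨a - 1, hAB a ha 1 one_pos⟩
    by_cases hbdd : BddAbove A
    · have hbddB : BddAbove B := by
        obtain ⟨b, hb⟩ := hbdd
        refine ⟨b + 1, fun β hβ => ?_⟩
        have := hb (hBA β hβ 1 one_pos)
        linarith
      have key : ∀ (A' B' : Set ℝ), B'.Nonempty → BddAbove A' →
          (∀ α ∈ B', ∀ ε > (0:ℝ), α - ε ∈ A') → sSup B' ≤ sSup A' := by
        intro A' B' hB' hbdd' htr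
        refine csSup_le hB' fun β hβ => ?_
        by_contra hcon
        push_neg at hcon
        have h2 := le_csSup hbdd' (htr β hβ ((β - sSup A') / 2) (by linarith))
        linarith
      exact le_antisymm (key _ _ hA hbddB hAB) (key _ _ hB hbdd hBA)
    · have hbddB : ¬ BddAbove B := by
        rintro ⟨b, hb⟩
        refine hbdd ⟨b + 1, fun a ha => ?_⟩
        have := hb (hAB a ha 1 one_pos)
        linarith
      rw [Real.sSup_of_not_bddAbove hbdd, Real.sSup_of_not_bddAbove hbddB]


lemma USet_empty (Φ : ℝ → ℝ) : USet Φ (∅ : Set X) = univ :=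
  eq_univ_of_forall fun _ => ⟨1, one_pos, 1, one_pos,
    fun _ _ _ _ _ _ z hz => absurd hz (Set.notMem_empty z)⟩

lemma LSet_empty (Φ : ℝ → ℝ) : LSet Φ (∅ : Set X) = univ :=
  eq_univ_of_forall fun _ => ⟨1, one_pos, 1, one_pos,
    fun _ _ _ _ _ _ z hz => absurd hz (Set.notMem_empty z)⟩

end CoverAux

/-- If `Φ(x) → δ ∈ (0,∞)` as `x → 0`, then the `Φ`-dimensions are the `θ`-Assouad spectra
for `θ = (1+δ)⁻¹`. -/
theorem phiDim_eq_assouadSpectrum_of_tendsto {X : Type*} [MetricSpace X]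
    (hX : IsDoublingSpace X) (Φ : ℝ → ℝ) (hΦ : IsDimensionFunction Φ)
    (δ : ℝ) (hδ : 0 < δ) (hlim : Tendsto Φ (nhdsWithin 0 (Ioo 0 1)) (nhds δ))
    (E : Set X) :
    upperPhiDim Φ E = upperAssouadSpectrum (1 + δ)⁻¹ E ∧
    lowerPhiDim Φ E = lowerAssouadSpectrum (1 + δ)⁻¹ E := by
  classical
  obtain ⟨hΦ0, -, -⟩ := hΦ
  have hδfun : (fun _ : ℝ => 1 / ((1:ℝ) + δ)⁻¹ - 1) = (fun _ : ℝ => δ) := by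
    funext x
    rw [one_div, inv_inv]
    ring
  have eU : upperAssouadSpectrum (1 + δ)⁻¹ E = upperPhiDim (fun _ => δ) E := by
    unfold upperAssouadSpectrum
    rw [hδfun]
  have eL : lowerAssouadSpectrum (1 + δ)⁻¹ E = lowerPhiDim (fun _ => δ) E := by
    unfold lowerAssouadSpectrum
    rw [hδfun]
  rw [eU, eL]
  rcases E.eq_empty_or_nonempty with hE | hE
  · subst hE
    constructor
    · show sInf (CoverAux.USet Φ (∅ : Set X)) = sInf (CoverAux.USet (fun _ => δ) (∅ : Set X))
      rw [CoverAux.USet_empty, CoverAux.USet_empty]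
    · show sSup (CoverAux.LSet Φ (∅ : Set X)) = sSup (CoverAux.LSet (fun _ => δ) (∅ : Set X))
      rw [CoverAux.LSet_empty, CoverAux.LSet_empty]
  · have hconst : ∀ x ∈ Ioo (0:ℝ) 1, 0 ≤ (fun _ : ℝ => δ) x := fun _ _ => hδ.le
    have hconstlim : Tendsto (fun _ : ℝ => δ) (nhdsWithin 0 (Ioo 0 1)) (nhds δ) :=
      tendsto_const_nhds
    obtain ⟨C, s, hC, hs, hball⟩ := CoverAux.doubling_ball_bound hX
    constructor
    · show sInf (CoverAux.USet Φ E) = sInf (CoverAux.USet (fun _ => δ) E)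
      exact CoverAux.interleave_sInf _ _
        (fun α hα ε hε => CoverAux.upper_transfer hΦ0 hconst hδ hlim hconstlim hE hα hε)
        (fun α hα ε hε => CoverAux.upper_transfer hconst hΦ0 hδ hconstlim hlim hE hα hε)
    · show sSup (CoverAux.LSet Φ E) = sSup (CoverAux.LSet (fun _ => δ) E)
      exact CoverAux.interleave_sSup _ _
        (fun α hα ε hε =>
          CoverAux.lower_transfer hΦ0 hconst hδ hlim hconstlim hC hs hball hE hα hε)
        (fun α hα ε hε =>
          CoverAux.lower_transfer hconst hΦ0 hδ hconstlim hlim hC hs hball hE hα hε)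


end
end
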